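/- arXiv:1803.01397 — 4 statements merged into one kernel-verified Lean document; each statement's English description precedes it below -/
import Mathlib

section
/- Let m ≥ 2 be an integer and p = (p_1,…,p_m) ∈ (1,∞]^m be such that 1 < p_m ≤ 2 < p_1,…,p_{m−1} and 1/2 ≤ |1/p| < 1. Then for every positive integer n and every m-linear form T : ℓ_{p_1}^n × ⋯ × ℓ_{p_m}^n → 𝕂, (∑_{j_1,…,j_m=1}^n |T(e_{j_1},…,e_{j_m})|^{1/(1−|1/p|)})^{1−|1/p|} ≤ ‖T‖. -/
open scoped ENNReal

/-- The `j`-th canonical unit vector of `ℓ_q^n` over `𝕂`. -/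
noncomputable def unitVec (𝕂 : Type*) [RCLike 𝕂] (q : ℝ≥0∞) {n : ℕ} (j : Fin n) :
    PiLp q (fun _ : Fin n => 𝕂) :=
  (WithLp.equiv q (∀ _ : Fin n, 𝕂)).symm (Pi.single j 1)


open Finset

namespace HLaux


variable {𝕂 : Type*} [RCLike 𝕂]

/-- superadditivity of rpow over finite sums -/
lemma sum_rpow_le_rpow_sum {ι : Type*} (s : Finset ι) (f : ι → ℝ) (hf : ∀ i ∈ s, 0 ≤ f i)
    {c : ℝ} (hc : 1 ≤ c) : ∑ i ∈ s, f i ^ c ≤ (∑ i ∈ s, f i) ^ c := by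
  have hc0 : c ≠ 0 := by positivity
  induction s using Finset.cons_induction with
  | empty => simp [Real.zero_rpow hc0]
  | cons a s ha ih =>
    have hfa : 0 ≤ f a := hf a (Finset.mem_cons_self a s)
    have hfs : ∀ i ∈ s, 0 ≤ f i := fun i hi => hf i (Finset.mem_cons_of_mem hi)
    have hsum : (0:ℝ) ≤ ∑ i ∈ s, f i := Finset.sum_nonneg hfs
    have h2 : ∀ x y : ℝ, 0 ≤ x → 0 ≤ y → x ^ c + y ^ c ≤ (x + y) ^ c := by
      intro x y hx hy
      have := NNReal.rpow_add_rpow_le_add (p := c) ⟨x, hx⟩ ⟨y, hy⟩ hc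
      have h' := (NNReal.coe_le_coe).2 this
      push_cast at h'
      have hS : (0:ℝ) ≤ x ^ c + y ^ c := by positivity
      have := Real.rpow_le_rpow (Real.rpow_nonneg hS _) h' (le_trans zero_le_one hc)
      rwa [← Real.rpow_mul hS, one_div_mul_cancel hc0, Real.rpow_one] at this
    calc ∑ i ∈ Finset.cons a s ha, f i ^ c = f a ^ c + ∑ i ∈ s, f i ^ c := by
          rw [Finset.sum_cons]
      _ ≤ f a ^ c + (∑ i ∈ s, f i) ^ c := by gcongr; exact ih hfs
      _ ≤ (f a + ∑ i ∈ s, f i) ^ c := h2 _ _ hfa hsum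
      _ = (∑ i ∈ Finset.cons a s ha, f i) ^ c := by rw [Finset.sum_cons]

def sgn (b : Bool) : ℝ := if b then 1 else -1

lemma pow_two_rpow (x : ℝ) (hx : 0 ≤ x) (μ : ℝ) : (x ^ (2:ℕ)) ^ (μ/2) = x ^ μ := by
  rw [← Real.rpow_natCast x 2, ← Real.rpow_mul hx]
  congr 1
  push_cast
  ring

lemma abs_sgn (b : Bool) : |sgn b| = 1 := by cases b <;> simp [sgn]

lemma rad_sq_identity : ∀ (n : ℕ) (a : Fin n → 𝕂),
    ∑ s : Fin n → Bool, ‖∑ k, (sgn (s k) : 𝕂) * a k‖ ^ 2 = 2 ^ n * ∑ k, ‖a k‖ ^ 2 := by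
  intro n
  induction n with
  | zero => intro a; simp
  | succ n ih =>
    intro a
    have e := Fin.consEquiv (fun _ : Fin (n + 1) => Bool)
    rw [← Equiv.sum_comp (Fin.consEquiv (fun _ : Fin (n + 1) => Bool))
      (fun s => ‖∑ k, (sgn (s k) : 𝕂) * a k‖ ^ 2)]
    rw [Fintype.sum_prod_type, Finset.sum_comm]
    have key : ∀ s' : Fin n → Bool,
        ∑ b : Bool, ‖∑ k, (sgn ((Fin.consEquiv (fun _ : Fin (n+1) => Bool)) (b, s') k) : 𝕂) * a k‖ ^ 2
          = 2 * ‖a 0‖ ^ 2 + 2 * ‖∑ k : Fin n, (sgn (s' k) : 𝕂) * a k.succ‖ ^ 2 := by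
      intro s'
      have expand : ∀ b : Bool,
          ∑ k, (sgn ((Fin.consEquiv (fun _ : Fin (n+1) => Bool)) (b, s') k) : 𝕂) * a k
            = (sgn b : 𝕂) * a 0 + ∑ k : Fin n, (sgn (s' k) : 𝕂) * a k.succ := by
        intro b
        rw [Fin.sum_univ_succ]
        simp [Fin.consEquiv]
      rw [Fintype.sum_bool, expand true, expand false]
      set Z := ∑ k : Fin n, (sgn (s' k) : 𝕂) * a k.succ with hZ
      have pl := parallelogram_law_with_norm 𝕂 Z (a 0)
      simp only [sgn, if_true, if_false] at *
      push_cast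
      have h1 : (1:𝕂) * a 0 + Z = Z + a 0 := by ring
      have h2 : (-1:𝕂) * a 0 + Z = Z - a 0 := by ring
      rw [h1, h2]
      nlinarith [pl]
    rw [Finset.sum_congr rfl (fun s' _ => key s')]
    rw [Finset.sum_add_distrib, ← Finset.mul_sum, ← Finset.mul_sum, ih (fun k => a k.succ),
      Finset.sum_const, Finset.card_univ]
    simp only [Fintype.card_pi, Fintype.card_bool, Finset.prod_const, Finset.card_univ,
      Fintype.card_fin, nsmul_eq_mul, Nat.cast_pow, Nat.cast_ofNat]
    rw [Fin.sum_univ_succ]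
    ring


lemma exists_signs {n : ℕ} {ι : Type*} [Fintype ι] {μ : ℝ} (hμ : 2 ≤ μ)
    (a : Fin n → ι → 𝕂) :
    ∃ s : Fin n → Bool,
      ∑ j : ι, ∑ k, ‖a k j‖ ^ μ ≤ ∑ j : ι, ‖∑ k, (sgn (s k) : 𝕂) * a k j‖ ^ μ := by
  have hμ2 : 1 ≤ μ / 2 := by linarith
  have hcard : (0:ℝ) < (2:ℝ) ^ n := by positivity
  -- average bound
  have avg : (2:ℝ) ^ n * (∑ j : ι, ∑ k, ‖a k j‖ ^ μ)
      ≤ ∑ s : Fin n → Bool, ∑ j : ι, ‖∑ k, (sgn (s k) : 𝕂) * a k j‖ ^ μ := by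
    rw [Finset.mul_sum]
    conv_rhs => rw [Finset.sum_comm]
    apply Finset.sum_le_sum
    intro j _
    set b : Fin n → 𝕂 := fun k => a k j with hb
    have step1 : ∑ k, ‖b k‖ ^ μ ≤ (∑ k, ‖b k‖ ^ 2) ^ (μ / 2) := by
      have := sum_rpow_le_rpow_sum (Finset.univ : Finset (Fin n)) (fun k => ‖b k‖ ^ 2)
        (fun i _ => by positivity) hμ2
      calc ∑ k, ‖b k‖ ^ μ = ∑ k, (‖b k‖ ^ (2:ℕ)) ^ (μ / 2) := by
            apply Finset.sum_congr rfl; intro k _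
            rw [pow_two_rpow _ (norm_nonneg _)]
        _ ≤ (∑ k, ‖b k‖ ^ 2) ^ (μ / 2) := this
    have step2 : (∑ k, ‖b k‖ ^ 2) ^ (μ / 2)
        ≤ ((2:ℝ) ^ n)⁻¹ * ∑ s : Fin n → Bool, ‖∑ k, (sgn (s k) : 𝕂) * b k‖ ^ μ := by
      have id2 : ∑ k, ‖b k‖ ^ 2
          = ∑ s : Fin n → Bool, ((2:ℝ)^n)⁻¹ * ‖∑ k, (sgn (s k) : 𝕂) * b k‖ ^ 2 := by
        rw [← Finset.mul_sum, rad_sq_identity n b, ← mul_assoc, inv_mul_cancel₀ hcard.ne',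
          one_mul]
      have jensen := Real.rpow_arith_mean_le_arith_mean_rpow Finset.univ
        (fun _ : Fin n → Bool => ((2:ℝ)^n)⁻¹)
        (fun s => ‖∑ k, (sgn (s k) : 𝕂) * b k‖ ^ 2)
        (fun i _ => by positivity)
        (by rw [Finset.sum_const, Finset.card_univ]
            simp only [Fintype.card_pi, Fintype.card_bool, Finset.prod_const, Finset.card_univ,
              Fintype.card_fin, nsmul_eq_mul, Nat.cast_pow, Nat.cast_ofNat]
            rw [mul_inv_cancel₀ hcard.ne'])
        (fun i _ => by positivity) hμ2
      rw [id2]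
      refine le_trans jensen ?_
      rw [← Finset.mul_sum]
      gcongr with s hs
      exact le_of_eq (pow_two_rpow _ (norm_nonneg _) _)
    calc (2:ℝ)^n * ∑ k, ‖b k‖ ^ μ
        ≤ (2:ℝ)^n * (((2:ℝ) ^ n)⁻¹ * ∑ s : Fin n → Bool, ‖∑ k, (sgn (s k) : 𝕂) * b k‖ ^ μ) :=
          mul_le_mul_of_nonneg_left (le_trans step1 step2) hcard.le
      _ = ∑ s : Fin n → Bool, ‖∑ k, (sgn (s k) : 𝕂) * b k‖ ^ μ := by
          rw [← mul_assoc, mul_inv_cancel₀ hcard.ne', one_mul]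
  -- extract a good sign pattern
  by_contra hcon
  push_neg at hcon
  have : ∑ s : Fin n → Bool, ∑ j : ι, ‖∑ k, (sgn (s k) : 𝕂) * a k j‖ ^ μ
      < ∑ s : Fin n → Bool, ∑ j : ι, ∑ k, ‖a k j‖ ^ μ := by
    apply Finset.sum_lt_sum_of_nonempty
    · exact Finset.univ_nonempty
    · intro s _; exact hcon s
  rw [Finset.sum_const, Finset.card_univ] at this
  simp only [Fintype.card_pi, Fintype.card_bool, Finset.prod_const, Finset.card_univ,
    Fintype.card_fin, nsmul_eq_mul, Nat.cast_pow, Nat.cast_ofNat] at this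
  linarith [avg]

lemma le_rpow_of_root_le {S B ρ : ℝ} (hS : 0 ≤ S) (hρ : 0 < ρ) (h : S ^ (1/ρ) ≤ B) :
    S ≤ B ^ ρ := by
  calc S = (S ^ (1/ρ)) ^ ρ := by
        rw [← Real.rpow_mul hS, one_div_mul_cancel hρ.ne', Real.rpow_one]
    _ ≤ B ^ ρ := Real.rpow_le_rpow (Real.rpow_nonneg hS _) h hρ.le

lemma mul_rpow_sub_one {x e : ℝ} (hx : 0 ≤ x) (he : 0 < e) : x ^ (e - 1) * x = x ^ e := by
  rcases eq_or_lt_of_le hx with h | h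
  · rw [← h, Real.zero_rpow he.ne', mul_zero]
  · nth_rewrite 2 [← Real.rpow_one x]
    rw [← Real.rpow_add h, sub_add_cancel]

lemma diag_lemma {n : ℕ} {μ q ρ B : ℝ} (hμ : 0 < μ) (hq : 0 < q) (hρ : 1 < ρ)
    (hrel : q * (ρ - 1) = μ * ρ) (hB : 0 ≤ B) (T : Fin n → ℝ) (hT : ∀ k, 0 ≤ T k)
    (H : ∀ x : Fin n → ℝ, (∀ k, 0 ≤ x k) → ∑ k, x k ^ q ≤ 1 → ∑ k, x k ^ μ * T k ≤ B) :
    ∑ k, T k ^ ρ ≤ B ^ ρ := by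
  set S := ∑ k, T k ^ ρ with hSdef
  have hS0 : 0 ≤ S := Finset.sum_nonneg fun k _ => Real.rpow_nonneg (hT k) _
  rcases eq_or_lt_of_le hS0 with h0 | hSpos
  · rw [← h0]; positivity
  have hρ0 : (0:ℝ) < ρ := by linarith
  set x : Fin n → ℝ := fun k => T k ^ (ρ / q) / S ^ (1/q) with hx
  have hx0 : ∀ k, 0 ≤ x k := fun k => by
    apply div_nonneg (Real.rpow_nonneg (hT k) _) (Real.rpow_nonneg hS0 _)
  have hq' : q ≠ 0 := hq.ne'
  have hconstraint : ∑ k, x k ^ q ≤ 1 := by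
    have hxq : ∀ k, x k ^ q = T k ^ ρ / S := by
      intro k
      rw [hx]
      simp only
      rw [Real.div_rpow (Real.rpow_nonneg (hT k) _) (Real.rpow_nonneg hS0 _),
        ← Real.rpow_mul (hT k), ← Real.rpow_mul hS0, div_mul_cancel₀ _ hq',
        one_div_mul_cancel hq', Real.rpow_one]
    rw [Finset.sum_congr rfl (fun k _ => hxq k), ← Finset.sum_div, ← hSdef,
      div_self hSpos.ne']
  have hval : ∑ k, x k ^ μ * T k = S ^ (1 - μ/q) := by
    have hterm : ∀ k, x k ^ μ * T k = T k ^ ρ / S ^ (μ/q) := by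
      intro k
      rw [hx]
      simp only
      rw [Real.div_rpow (Real.rpow_nonneg (hT k) _) (Real.rpow_nonneg hS0 _),
        ← Real.rpow_mul (hT k), ← Real.rpow_mul hS0,
        show ρ / q * μ = ρ - 1 by field_simp; nlinarith [hrel],
        show (1:ℝ)/q*μ = μ/q by ring,
        div_mul_eq_mul_div, mul_rpow_sub_one (hT k) hρ0]
    rw [Finset.sum_congr rfl (fun k _ => hterm k), ← Finset.sum_div, ← hSdef,
      Real.rpow_sub hSpos, Real.rpow_one]
  have h1ρ : 1 - μ/q = 1/ρ := by
    have hρ' : ρ ≠ 0 := hρ0.ne'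
    field_simp
    nlinarith [hrel]
  have hfin := H x hx0 hconstraint
  rw [hval, h1ρ] at hfin
  exact le_rpow_of_root_le hS0 hρ0 hfin


lemma sq_mul_rpow_sub_two {x e : ℝ} (hx : 0 ≤ x) (he : 0 < e) :
    x ^ (2:ℕ) * x ^ (e - 2) = x ^ e := by
  rcases eq_or_lt_of_le hx with h | h
  · rw [← h, Real.zero_rpow he.ne']
    norm_num
  · rw [← Real.rpow_natCast x 2, ← Real.rpow_add h]
    congr 1
    push_cast
    ring

lemma base_dual {n : ℕ} {q lam M : ℝ} (hq : 1 < q) (hlam2 : 2 ≤ lam)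
    (hrel : (lam - 1) * q = lam) (hM : 0 ≤ M) (d : Fin n → 𝕂)
    (H : ∀ x : Fin n → 𝕂, ∑ k, ‖x k‖ ^ q ≤ 1 → ‖∑ k, x k * d k‖ ≤ M) :
    ∑ k, ‖d k‖ ^ lam ≤ M ^ lam := by
  set S := ∑ k, ‖d k‖ ^ lam with hSdef
  have hS0 : 0 ≤ S := Finset.sum_nonneg fun k _ => Real.rpow_nonneg (norm_nonneg _) _
  rcases eq_or_lt_of_le hS0 with h0 | hSpos
  · rw [← h0]; positivity
  have hq0 : (0:ℝ) < q := by linarith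
  have hq' : q ≠ 0 := hq0.ne'
  have hlam1 : (1:ℝ) < lam := by linarith
  have hlam0 : (0:ℝ) < lam := by linarith
  set x : Fin n → 𝕂 :=
    fun k => (starRingEnd 𝕂) (d k) * ((‖d k‖ ^ (lam - 2) / S ^ (1/q) : ℝ) : 𝕂) with hx
  have hA0 : ∀ k, (0:ℝ) ≤ ‖d k‖ ^ (lam - 2) / S ^ (1/q) :=
    fun k => div_nonneg (Real.rpow_nonneg (norm_nonneg _) _) (Real.rpow_nonneg hS0 _)
  have hxnorm : ∀ k, ‖x k‖ = ‖d k‖ ^ (lam - 1) / S ^ (1/q) := by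
    intro k
    rw [hx]
    simp only
    rw [norm_mul, RCLike.norm_conj, RCLike.norm_ofReal, abs_of_nonneg (hA0 k),
      mul_div_assoc']
    congr 1
    rw [mul_comm, show lam - 2 = lam - 1 - 1 by ring,
      mul_rpow_sub_one (norm_nonneg _) (by linarith : (0:ℝ) < lam - 1)]
  have hconstraint : ∑ k, ‖x k‖ ^ q ≤ 1 := by
    have hxq : ∀ k, ‖x k‖ ^ q = ‖d k‖ ^ lam / S := by
      intro k
      rw [hxnorm k,
        Real.div_rpow (Real.rpow_nonneg (norm_nonneg _) _) (Real.rpow_nonneg hS0 _),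
        ← Real.rpow_mul (norm_nonneg _), ← Real.rpow_mul hS0, hrel,
        one_div_mul_cancel hq', Real.rpow_one]
    rw [Finset.sum_congr rfl (fun k _ => hxq k), ← Finset.sum_div, ← hSdef,
      div_self hSpos.ne']
  have hval : ∑ k, x k * d k = ((S ^ (1 - 1/q) : ℝ) : 𝕂) := by
    have hterm : ∀ k, x k * d k = ((‖d k‖ ^ lam / S ^ (1/q) : ℝ) : 𝕂) := by
      intro k
      rw [hx]
      simp only
      rw [mul_comm ((starRingEnd 𝕂) (d k)) _, mul_assoc, RCLike.conj_mul]
      have hcast : (‖d k‖:𝕂) ^ 2 = ((‖d k‖ ^ (2:ℕ) : ℝ) : 𝕂) := by push_cast; ring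
      rw [hcast, ← RCLike.ofReal_mul]
      congr 1
      rw [div_mul_eq_mul_div]
      congr 1
      rw [mul_comm, mul_comm (‖d k‖ ^ (2:ℕ)) _]
      rw [mul_comm _ (‖d k‖ ^ (2:ℕ)), sq_mul_rpow_sub_two (norm_nonneg (d k)) hlam0]
    rw [Finset.sum_congr rfl (fun k _ => hterm k), ← RCLike.ofReal_sum]
    congr 1
    rw [← Finset.sum_div, ← hSdef, Real.rpow_sub hSpos, Real.rpow_one]
  have hroot := H x hconstraint
  rw [hval] at hroot
  rw [RCLike.norm_ofReal, abs_of_nonneg (Real.rpow_nonneg hS0 _)] at hroot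
  have h1l : 1 - 1/q = 1/lam := by
    field_simp
    nlinarith [hrel]
  rw [h1l] at hroot
  exact le_rpow_of_root_le hS0 hlam0 hroot


lemma sum_consEquiv {n m : ℕ} {α : Type*} [AddCommMonoid α] (g : (Fin (m+1) → Fin n) → α) :
    ∑ j, g j = ∑ k : Fin n, ∑ j' : Fin m → Fin n, g (Fin.cons k j') := by
  rw [← Equiv.sum_comp (Fin.consEquiv fun _ : Fin (m+1) => Fin n) g, Fintype.sum_prod_type]
  rfl

lemma sum_funUnique {n : ℕ} {α : Type*} [AddCommMonoid α] (g : (Fin 1 → Fin n) → α) :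
    ∑ j, g j = ∑ k, g (fun _ => k) := by
  rw [← Equiv.sum_comp (Equiv.funUnique (Fin 1) (Fin n)).symm g]
  rfl

variable (𝕂) in
def Cns {n : ℕ} (t : ℝ) (x : Fin n → 𝕂) : Prop :=
  if t = 0 then ∀ k, ‖x k‖ ≤ 1 else ∑ k, ‖x k‖ ^ (1/t) ≤ 1

lemma Cns_congr {n : ℕ} {t : ℝ} {x y : Fin n → 𝕂} (h : ∀ k, ‖y k‖ = ‖x k‖) :
    Cns 𝕂 t x → Cns 𝕂 t y := by
  unfold Cns; split_ifs with ht
  · intro hx k; rw [h k]; exact hx k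
  · intro hx; simp_rw [h]; exact hx


lemma core : ∀ (m : ℕ) (n : ℕ) (t : Fin (m+1) → ℝ), (∀ i, 0 ≤ t i) →
    1/2 ≤ t (Fin.last m) → (∑ i, t i) < 1 →
    ∀ (M : ℝ), 0 ≤ M → ∀ (c : (Fin (m+1) → Fin n) → 𝕂),
    (∀ x : Fin (m+1) → (Fin n → 𝕂), (∀ i, Cns 𝕂 (t i) (x i)) →
      ‖∑ j : Fin (m+1) → Fin n, (∏ i, x i (j i)) * c j‖ ≤ M) →
    ∑ j : Fin (m+1) → Fin n, ‖c j‖ ^ (1/(1 - ∑ i, t i))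
      ≤ M ^ (1/(1 - ∑ i, t i)) := by
  intro m
  induction m with
  | zero =>
    intro n t ht0 hlast hσ M hM c H
    have hl0 : (Fin.last 0) = (0 : Fin 1) := rfl
    rw [hl0] at hlast
    rw [Fin.sum_univ_one] at hσ ⊢
    have htpos : 0 < t 0 := by linarith
    have h1t : 0 < 1 - t 0 := by linarith
    have hq : 1 < 1 / t 0 := by rw [lt_div_iff₀ htpos]; linarith
    have hlam2 : 2 ≤ 1 / (1 - t 0) := by rw [le_div_iff₀ h1t]; linarith
    have hrel : (1 / (1 - t 0) - 1) * (1 / t 0) = 1 / (1 - t 0) := by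
      field_simp
      ring
    have hd := base_dual hq hlam2 hrel hM (fun k => c (fun _ => k)) ?_
    · rw [sum_funUnique (fun j => ‖c j‖ ^ (1/(1 - t 0)))]
      exact hd
    · intro x hx
      have hcns : ∀ i : Fin 1, Cns 𝕂 (t i) ((fun _ => x) i) := by
        intro i
        have : i = 0 := Subsingleton.elim i 0
        rw [this]
        rw [Cns, if_neg htpos.ne']
        exact hx
      have := H (fun _ => x) hcns
      rw [sum_funUnique (fun j => (∏ i, x (j i)) * c j)] at this
      simpa [Fin.prod_univ_one] using this
  | succ m ih =>
    intro n t ht0 hlast hσ M hM c H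
    set σ' : ℝ := ∑ i : Fin (m+1), t i.succ with hσ'def
    have hsum : ∑ i, t i = t 0 + σ' := Fin.sum_univ_succ t
    have hσ'0 : 0 ≤ σ' := Finset.sum_nonneg fun i _ => ht0 _
    have ht00 : 0 ≤ t 0 := ht0 0
    have hσ'1 : σ' < 1 := by rw [hsum] at hσ; linarith
    have hhalf : 1/2 ≤ σ' := by
      have h1 := Finset.single_le_sum (f := fun i : Fin (m+1) => t i.succ)
        (fun i _ => ht0 _) (Finset.mem_univ (Fin.last m))
      simp only [Fin.succ_last] at h1
      exact le_trans hlast h1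
    have h1σ : 0 < 1 - ∑ i, t i := by linarith
    have h1σ' : 0 < 1 - σ' := by linarith
    have hμ2 : 2 ≤ 1 / (1 - σ') := by rw [le_div_iff₀ h1σ']; linarith
    have hμpos : (0:ℝ) < 1 / (1 - σ') := by positivity
    -- Step A : for admissible y, the contracted coefficients satisfy the (m+1)-linear bound
    have stepA : ∀ y : Fin n → 𝕂, Cns 𝕂 (t 0) y →
        ∑ j' : Fin (m+1) → Fin n, ‖∑ k, y k * c (Fin.cons k j')‖ ^ (1 / (1 - σ'))
          ≤ M ^ (1 / (1 - σ')) := by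
      intro y hy
      refine ih n (fun i => t i.succ) (fun i => ht0 _) ?_ hσ'1 M hM
        (fun j' => ∑ k, y k * c (Fin.cons k j')) ?_
      · simp only [Fin.succ_last]
        exact hlast
      · intro x' hx'
        have hX : ∀ i, Cns 𝕂 (t i) (Fin.cons (α := fun _ => Fin n → 𝕂) y x' i) := by
          intro i
          refine Fin.cases ?_ ?_ i
          · rw [Fin.cons_zero]; exact hy
          · intro i'; rw [Fin.cons_succ]; exact hx' i'
        have hHX := H (Fin.cons y x') hX
        refine le_trans (le_of_eq ?_) hHX
        rw [sum_consEquiv (fun j => (∏ i, Fin.cons (α := fun _ => Fin n → 𝕂) y x' i (j i)) * c j)]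
        rw [Finset.sum_comm]
        congr 1
        apply Finset.sum_congr rfl
        intro j' _
        rw [Finset.mul_sum]
        apply Finset.sum_congr rfl
        intro k _
        simp only [Fin.prod_univ_succ, Fin.cons_zero, Fin.cons_succ]
        ring
    -- the column ℓ_μ masses
    have hTk0 : ∀ k : Fin n, (0:ℝ) ≤ ∑ j' : Fin (m+1) → Fin n, ‖c (Fin.cons k j')‖ ^ (1 / (1 - σ')) :=
      fun k => Finset.sum_nonneg fun j' _ => Real.rpow_nonneg (norm_nonneg _) _
    -- Step B : diagonal-type estimate from random signs
    have claim : ∀ x : Fin n → ℝ, (∀ k, 0 ≤ x k) → Cns 𝕂 (t 0) (fun k => ((x k : ℝ) : 𝕂)) →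
        ∑ k, x k ^ (1 / (1 - σ')) * ∑ j' : Fin (m+1) → Fin n, ‖c (Fin.cons k j')‖ ^ (1 / (1 - σ'))
          ≤ M ^ (1 / (1 - σ')) := by
      intro x hx0 hxC
      obtain ⟨s, hs⟩ := exists_signs (𝕂 := 𝕂) hμ2
        (a := fun k (j' : Fin (m+1) → Fin n) => ((x k : ℝ) : 𝕂) * c (Fin.cons k j'))
      have hynorm : ∀ k, ‖((sgn (s k) * x k : ℝ) : 𝕂)‖ = ‖((x k : ℝ) : 𝕂)‖ := by
        intro k
        rw [RCLike.norm_ofReal, RCLike.norm_ofReal, abs_mul, abs_sgn, one_mul]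
      have hyC : Cns 𝕂 (t 0) (fun k => ((sgn (s k) * x k : ℝ) : 𝕂)) := Cns_congr hynorm hxC
      have hA := stepA _ hyC
      have lhs_eq : ∑ j' : Fin (m+1) → Fin n, ∑ k,
          ‖((x k : ℝ) : 𝕂) * c (Fin.cons k j')‖ ^ (1 / (1 - σ'))
          = ∑ k, x k ^ (1 / (1 - σ')) *
              ∑ j' : Fin (m+1) → Fin n, ‖c (Fin.cons k j')‖ ^ (1 / (1 - σ')) := by
        rw [Finset.sum_comm]
        apply Finset.sum_congr rfl
        intro k _
        rw [Finset.mul_sum]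
        apply Finset.sum_congr rfl
        intro j' _
        rw [norm_mul, RCLike.norm_ofReal, abs_of_nonneg (hx0 k),
          Real.mul_rpow (hx0 k) (norm_nonneg _)]
      have rhs_eq : ∀ j' : Fin (m+1) → Fin n,
          ∑ k, (sgn (s k) : 𝕂) * (((x k : ℝ) : 𝕂) * c (Fin.cons k j'))
            = ∑ k, ((sgn (s k) * x k : ℝ) : 𝕂) * c (Fin.cons k j') := by
        intro j'
        apply Finset.sum_congr rfl
        intro k _
        push_cast
        ring
      rw [← lhs_eq]
      refine le_trans hs ?_
      refine le_trans (le_of_eq ?_) hA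
      apply Finset.sum_congr rfl
      intro j' _
      rw [rhs_eq j']
    -- split on whether the first exponent is infinite
    by_cases ht0z : t 0 = 0
    · have hLeq : 1/(1 - ∑ i, t i) = 1 / (1 - σ') := by rw [hsum, ht0z, zero_add]
      have hc1 : Cns 𝕂 (t 0) (fun _ : Fin n => ((1:ℝ) : 𝕂)) := by
        rw [Cns, if_pos ht0z]
        intro k
        simp
      have h1 := claim (fun _ => 1) (fun _ => zero_le_one) hc1
      simp only [Real.one_rpow, one_mul] at h1
      rw [hLeq, sum_consEquiv (fun j => ‖c j‖ ^ (1/(1 - σ')))]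
      exact h1
    · have htpos : 0 < t 0 := lt_of_le_of_ne ht00 (Ne.symm ht0z)
      have hρ1 : 1 < (1 - σ') / (1 - ∑ i, t i) := by
        rw [lt_div_iff₀ h1σ, hsum]
        linarith
      have hq0 : (0:ℝ) < 1 / t 0 := by positivity
      have hrel : (1 / t 0) * ((1 - σ') / (1 - ∑ i, t i) - 1)
          = (1 / (1 - σ')) * ((1 - σ') / (1 - ∑ i, t i)) := by
        have hne : (1:ℝ) - (t 0 + σ') ≠ 0 := by rw [← hsum]; exact h1σ.ne'
        rw [hsum]
        field_simp [hne]
        ring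
      have hdiag := diag_lemma hμpos hq0 hρ1 hrel
        (B := M ^ (1 / (1 - σ'))) (by positivity)
        (fun k => ∑ j' : Fin (m+1) → Fin n, ‖c (Fin.cons k j')‖ ^ (1 / (1 - σ'))) hTk0 ?_
      · -- conclude
        have hμρ : (1 / (1 - σ')) * ((1 - σ') / (1 - ∑ i, t i)) = 1/(1 - ∑ i, t i) := by
          field_simp
        rw [sum_consEquiv (fun j => ‖c j‖ ^ (1/(1 - ∑ i, t i)))]
        calc ∑ k : Fin n, ∑ j' : Fin (m+1) → Fin n, ‖c (Fin.cons k j')‖ ^ (1/(1 - ∑ i, t i))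
            ≤ ∑ k : Fin n, (∑ j' : Fin (m+1) → Fin n, ‖c (Fin.cons k j')‖ ^ (1 / (1 - σ')))
                ^ ((1 - σ') / (1 - ∑ i, t i)) := by
              apply Finset.sum_le_sum
              intro k _
              have := sum_rpow_le_rpow_sum (Finset.univ : Finset (Fin (m+1) → Fin n))
                (fun j' => ‖c (Fin.cons k j')‖ ^ (1 / (1 - σ')))
                (fun j' _ => Real.rpow_nonneg (norm_nonneg _) _) hρ1.le
              refine le_trans (le_of_eq ?_) this
              apply Finset.sum_congr rfl
              intro j' _
              rw [← Real.rpow_mul (norm_nonneg _), hμρ]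
          _ ≤ (M ^ (1 / (1 - σ'))) ^ ((1 - σ') / (1 - ∑ i, t i)) := hdiag
          _ = M ^ (1/(1 - ∑ i, t i)) := by
              rw [← Real.rpow_mul hM, hμρ]
      · intro x hx0 hxq
        apply claim x hx0
        rw [Cns, if_neg ht0z]
        have : ∀ k, ‖((x k : ℝ) : 𝕂)‖ ^ (1 / t 0) = x k ^ (1 / t 0) := by
          intro k
          rw [RCLike.norm_ofReal, abs_of_nonneg (hx0 k)]
        rw [Finset.sum_congr rfl (fun k _ => this k)]
        exact hxq




variable {𝕂 : Type*} [RCLike 𝕂]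

lemma pilp_norm_le_one_top {n : ℕ} (hn : 0 < n) {q : ℝ≥0∞} [Fact (1 ≤ q)] (hq : q = ∞)
    (v : Fin n → 𝕂) (hv : ∀ k, ‖v k‖ ≤ 1) :
    ‖(WithLp.equiv q (∀ _ : Fin n, 𝕂)).symm v‖ ≤ 1 := by
  subst hq
  haveI : Nonempty (Fin n) := Fin.pos_iff_nonempty.mp hn
  rw [PiLp.norm_eq_ciSup]
  exact ciSup_le fun k => by exact hv k

lemma pilp_norm_le_one_fin {n : ℕ} {q : ℝ≥0∞} [Fact (1 ≤ q)] (hq : 0 < q.toReal)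
    (v : Fin n → 𝕂) (hv : ∑ k, ‖v k‖ ^ q.toReal ≤ 1) :
    ‖(WithLp.equiv q (∀ _ : Fin n, 𝕂)).symm v‖ ≤ 1 := by
  rw [PiLp.norm_eq_sum hq]
  change (∑ k, ‖v k‖ ^ q.toReal) ^ (1 / q.toReal) ≤ 1
  exact Real.rpow_le_one
    (Finset.sum_nonneg fun k _ => Real.rpow_nonneg (norm_nonneg _) _) hv (by positivity)

set_option synthInstance.maxHeartbeats 1000000 in
lemma equiv_symm_eq_sum {n : ℕ} (q : ℝ≥0∞) (v : Fin n → 𝕂) :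
    (WithLp.equiv q (∀ _ : Fin n, 𝕂)).symm v = ∑ k, v k • unitVec 𝕂 q k := by
  have h1 : ∑ k, Pi.single k (v k) = v := Finset.univ_sum_single v
  calc (WithLp.equiv q _).symm v
      = (WithLp.linearEquiv q 𝕂 (∀ _ : Fin n, 𝕂)).symm (∑ k, Pi.single k (v k)) := by
        rw [h1]; rfl
    _ = ∑ k, (WithLp.linearEquiv q 𝕂 (∀ _ : Fin n, 𝕂)).symm (Pi.single k (v k)) :=
        map_sum _ _ _
    _ = ∑ k, v k • unitVec 𝕂 q k := by
        apply Finset.sum_congr rfl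
        intro k _
        have h2 : (Pi.single k (v k) : ∀ _ : Fin n, 𝕂) = v k • (Pi.single k (1:𝕂) : ∀ _ : Fin n, 𝕂) := by
          rw [← Pi.single_smul' k (v k) (1:𝕂), smul_eq_mul, mul_one]
        rw [h2, map_smul]
        rfl

end HLaux


open HLaux in
theorem stmt5 (𝕂 : Type*) [RCLike 𝕂] (m : ℕ) (hm : 2 ≤ m)
    (p : Fin m → ℝ≥0∞) (hp : ∀ i, 1 < p i) [∀ i, Fact (1 ≤ p i)]
    -- `1 < p_m ≤ 2 < p_1, …, p_{m-1}`:
    (hpm : p ⟨m - 1, by omega⟩ ≤ 2)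
    (hother : ∀ i : Fin m, (i : ℕ) < m - 1 → 2 < p i)
    (hlo : (1 : ℝ) / 2 ≤ ∑ i, (1 / p i).toReal)
    (hhi : ∑ i, (1 / p i).toReal < 1)
    (n : ℕ) (hn : 0 < n)
    (T : ContinuousMultilinearMap 𝕂 (fun i : Fin m => PiLp (p i) (fun _ : Fin n => 𝕂)) 𝕂) :
    (∑ j : Fin m → Fin n,
        ‖T (fun i => unitVec 𝕂 (p i) (j i))‖ ^ ((1 : ℝ) / (1 - ∑ i, (1 / p i).toReal))) ^
        (1 - ∑ i, (1 / p i).toReal)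
      ≤ ‖T‖ := by
  obtain ⟨M0, rfl⟩ : ∃ M0, m = M0 + 1 := ⟨m - 1, by omega⟩
  set t : Fin (M0+1) → ℝ := fun i => (1 / p i).toReal with htdef
  have hfin0 : ∀ i, p i ≠ 0 := fun i => (lt_trans zero_lt_one (hp i)).ne'
  have htinv : ∀ i, t i = ((p i).toReal)⁻¹ := by
    intro i; rw [htdef]; simp only; rw [one_div, ENNReal.toReal_inv]
  have ht0 : ∀ i, 0 ≤ t i := fun i => ENNReal.toReal_nonneg
  have hidx : (⟨M0 + 1 - 1, by omega⟩ : Fin (M0+1)) = Fin.last M0 := rfl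
  rw [hidx] at hpm
  have hplast_ne : p (Fin.last M0) ≠ ∞ := (lt_of_le_of_lt hpm (by norm_num)).ne
  have hlast2 : (p (Fin.last M0)).toReal ≤ 2 := by
    have := (ENNReal.toReal_le_toReal hplast_ne (by norm_num : (2:ℝ≥0∞) ≠ ∞)).2 hpm
    simpa using this
  have hlastpos : 0 < (p (Fin.last M0)).toReal :=
    ENNReal.toReal_pos (hfin0 _) hplast_ne
  have hlast : 1/2 ≤ t (Fin.last M0) := by
    rw [htinv, show (1:ℝ)/2 = 2⁻¹ by norm_num]
    exact inv_anti₀ hlastpos hlast2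
  have hM : (0:ℝ) ≤ ‖T‖ := norm_nonneg T
  have hcore := core (𝕂 := 𝕂) M0 n t ht0 hlast hhi ‖T‖ hM
    (fun j => T (fun i => unitVec 𝕂 (p i) (j i))) ?_
  · have h1σ : 0 < 1 - ∑ i, t i := by
      have : ∑ i, t i < 1 := hhi
      linarith
    have hfin := Real.rpow_le_rpow
      (Finset.sum_nonneg fun j _ => Real.rpow_nonneg (norm_nonneg _) _) hcore h1σ.le
    rw [← Real.rpow_mul hM, one_div_mul_cancel h1σ.ne', Real.rpow_one] at hfin
    exact hfin
  · intro x hx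
    have hXnorm : ∀ i, ‖(WithLp.equiv (p i) (∀ _ : Fin n, 𝕂)).symm (x i)‖ ≤ 1 := by
      intro i
      by_cases hpi : p i = ∞
      · have hti : t i = 0 := by rw [htinv, hpi]; simp
        have cns := hx i
        rw [Cns, if_pos hti] at cns
        exact pilp_norm_le_one_top hn hpi (x i) cns
      · have htoReal_pos : 0 < (p i).toReal := ENNReal.toReal_pos (hfin0 i) hpi
        have hti : t i ≠ 0 := by rw [htinv]; positivity
        have cns := hx i
        rw [Cns, if_neg hti] at cns
        rw [htinv i, one_div, inv_inv] at cns
        exact pilp_norm_le_one_fin htoReal_pos (x i) cns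
    have hexp : ∑ j : Fin (M0+1) → Fin n,
        (∏ i, x i (j i)) * T (fun i => unitVec 𝕂 (p i) (j i))
        = T (fun i => (WithLp.equiv (p i) (∀ _ : Fin n, 𝕂)).symm (x i)) := by
      have h1 : (fun i => (WithLp.equiv (p i) (∀ _ : Fin n, 𝕂)).symm (x i))
          = fun i => ∑ k, x i k • unitVec 𝕂 (p i) k :=
        funext fun i => equiv_symm_eq_sum _ _
      rw [h1]
      rw [show T (fun i => ∑ k, x i k • unitVec 𝕂 (p i) k)
          = T.toMultilinearMap (fun i => ∑ k : Fin n, x i k • unitVec 𝕂 (p i) k) from rfl]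
      rw [MultilinearMap.map_sum]
      apply Finset.sum_congr rfl
      intro j _
      rw [MultilinearMap.map_smul_univ, smul_eq_mul]
      rfl
    rw [hexp]
    refine le_trans (T.le_opNorm _) ?_
    have hprod : ∏ i, ‖(WithLp.equiv (p i) (∀ _ : Fin n, 𝕂)).symm (x i)‖ ≤ 1 :=
      Finset.prod_le_one (fun i _ => norm_nonneg _) (fun i _ => hXnorm i)
    exact mul_le_of_le_one_right hM hprod
end

section
/- For every positive integer n and every bilinear form T : ℓ_∞^n × ℓ_∞^n → ℂ, (∑_{j,k=1}^n |T(e_j, e_k)|^{4/3})^{3/4} ≤ √2 ‖T‖. -/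
open scoped ENNReal


/-- The `j`-th canonical unit vector of `ℓ_∞^n` over `ℂ`. -/
noncomputable def unitVecInf {n : ℕ} (j : Fin n) : PiLp ⊤ (fun _ : Fin n => ℂ) :=
  (WithLp.equiv ⊤ (∀ _ : Fin n, ℂ)).symm (Pi.single j 1)

noncomputable def Complex.abs : AbsoluteValue ℂ ℝ :=
  IsAbsoluteValue.toAbsoluteValue (norm : ℂ → ℝ)

@[simp] lemma Complex.abs_apply (z : ℂ) : Complex.abs z = ‖z‖ := rfl

lemma Complex.norm_eq_abs (z : ℂ) : ‖z‖ = Complex.abs z := rfl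

lemma Complex.sq_abs (z : ℂ) : Complex.abs z ^ 2 = Complex.normSq z := by
  simp [Complex.sq_norm]

lemma Complex.abs_conj (z : ℂ) : Complex.abs ((starRingEnd ℂ) z) = Complex.abs z := by simp

lemma Complex.abs_ofReal (r : ℝ) : Complex.abs (r : ℂ) = |r| := by simp

lemma Complex.normSq_eq_abs (z : ℂ) : Complex.normSq z = Complex.abs z ^ 2 := by
  simp [Complex.normSq_eq_norm_sq]

variable {n : ℕ}

lemma vec_eq_sum (x : Fin n → ℂ) :
    (WithLp.equiv ⊤ (∀ _ : Fin n, ℂ)).symm x = ∑ j, x j • unitVecInf j := by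
  ext k
  simp [unitVecInf, Pi.single_apply]

lemma cons_eq_update0 (vx vy v : PiLp ⊤ (fun _ : Fin n => ℂ)) :
    (![v, vy] : Fin 2 → PiLp ⊤ (fun _ : Fin n => ℂ)) = Function.update ![vx, vy] 0 v := by
  funext i
  fin_cases i <;> simp [Function.update]

lemma cons_eq_update1 (vx vy v : PiLp ⊤ (fun _ : Fin n => ℂ)) :
    (![vx, v] : Fin 2 → PiLp ⊤ (fun _ : Fin n => ℂ)) = Function.update ![vx, vy] 1 v := by
  funext i
  fin_cases i <;> simp [Function.update]

lemma bilin_expand (T : ContinuousMultilinearMap ℂ (fun _ : Fin 2 => PiLp ⊤ (fun _ : Fin n => ℂ)) ℂ)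
    (x y : Fin n → ℂ) :
    T ![(WithLp.equiv ⊤ (∀ _ : Fin n, ℂ)).symm x, (WithLp.equiv ⊤ (∀ _ : Fin n, ℂ)).symm y]
      = ∑ j, ∑ k, x j * y k * T ![unitVecInf j, unitVecInf k] := by
  have expand_fst : ∀ y' : PiLp ⊤ (fun _ : Fin n => ℂ),
      T ![(WithLp.equiv ⊤ (∀ _ : Fin n, ℂ)).symm x, y'] = ∑ j, x j • T ![unitVecInf j, y'] := by
    intro y'
    rw [cons_eq_update0 ((WithLp.equiv ⊤ (∀ _ : Fin n, ℂ)).symm x) y'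
      ((WithLp.equiv ⊤ (∀ _ : Fin n, ℂ)).symm x), vec_eq_sum x,
      ← ContinuousMultilinearMap.coe_coe T,
      T.toMultilinearMap.map_update_sum Finset.univ 0 (fun j => x j • unitVecInf j) _]
    refine Finset.sum_congr rfl fun j _ => ?_
    rw [T.toMultilinearMap.map_update_smul _ 0 (x j) (unitVecInf j)]
    congr 1
    rw [ContinuousMultilinearMap.coe_coe]
    congr 1
    exact (cons_eq_update0 _ y' (unitVecInf j)).symm
  have expand_snd : ∀ v : PiLp ⊤ (fun _ : Fin n => ℂ),
      T ![v, (WithLp.equiv ⊤ (∀ _ : Fin n, ℂ)).symm y] = ∑ k, y k • T ![v, unitVecInf k] := by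
    intro v
    rw [cons_eq_update1 v ((WithLp.equiv ⊤ (∀ _ : Fin n, ℂ)).symm y)
      ((WithLp.equiv ⊤ (∀ _ : Fin n, ℂ)).symm y), vec_eq_sum y,
      ← ContinuousMultilinearMap.coe_coe T,
      T.toMultilinearMap.map_update_sum Finset.univ 1 (fun k => y k • unitVecInf k) _]
    refine Finset.sum_congr rfl fun k _ => ?_
    rw [T.toMultilinearMap.map_update_smul _ 1 (y k) (unitVecInf k)]
    congr 1
    rw [ContinuousMultilinearMap.coe_coe]
    congr 1
    exact (cons_eq_update1 v _ (unitVecInf k)).symm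
  rw [expand_fst]
  refine Finset.sum_congr rfl fun j _ => ?_
  rw [expand_snd (unitVecInf j), Finset.smul_sum]
  refine Finset.sum_congr rfl fun k _ => ?_
  rw [smul_eq_mul, smul_eq_mul]
  ring

lemma norm_le_one (x : Fin n → ℂ) (hn : 0 < n) (hx : ∀ j, Complex.abs (x j) ≤ 1) :
    ‖(WithLp.equiv ⊤ (∀ _ : Fin n, ℂ)).symm x‖ ≤ 1 := by
  have : Nonempty (Fin n) := ⟨⟨0, hn⟩⟩
  rw [PiLp.norm_eq_ciSup]
  exact ciSup_le fun j => by
    simpa using hx j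

noncomputable def wf (t : Fin 4) : ℂ := Complex.I ^ (t : ℕ)

lemma wf0 : wf 0 = 1 := by norm_num [wf, show ((0 : Fin 4) : ℕ) = 0 from rfl]
lemma wf1 : wf 1 = Complex.I := by norm_num [wf, show ((1 : Fin 4) : ℕ) = 1 from rfl]
lemma wf2 : wf 2 = -1 := by
  norm_num [wf, show ((2 : Fin 4) : ℕ) = 2 from rfl, sq, Complex.I_mul_I]
lemma wf3 : wf 3 = -Complex.I := by
  norm_num [wf, show ((3 : Fin 4) : ℕ) = 3 from rfl, pow_succ, sq, Complex.I_mul_I]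

lemma wf_abs (t : Fin 4) : Complex.abs (wf t) = 1 := by
  fin_cases t <;> simp [wf0, wf1, wf2, wf3]

lemma sum4_sq (u v : ℂ) : ∑ t : Fin 4, Complex.abs (wf t * u + v) ^ 2
    = 4 * (Complex.abs u ^ 2 + Complex.abs v ^ 2) := by
  simp only [Fin.sum_univ_four, wf0, wf1, wf2, wf3]
  simp only [Complex.sq_abs, Complex.normSq_apply, Complex.add_re, Complex.add_im,
    Complex.mul_re, Complex.mul_im, Complex.I_re, Complex.I_im, Complex.neg_re, Complex.neg_im,
    Complex.one_re, Complex.one_im, Complex.sq_abs]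
  ring

lemma sum4_quad (u v : ℂ) : ∑ t : Fin 4, Complex.abs (wf t * u + v) ^ 4
    = 4 * (Complex.abs u ^ 4 + 4 * Complex.abs u ^ 2 * Complex.abs v ^ 2 + Complex.abs v ^ 4) := by
  have h : ∀ w : ℂ, Complex.abs w ^ 4 = Complex.normSq w ^ 2 := by
    intro w
    rw [show (4:ℕ) = 2*2 by norm_num, pow_mul, Complex.sq_abs]
  simp only [Fin.sum_univ_four, wf0, wf1, wf2, wf3, h]
  simp only [Complex.normSq_apply, Complex.add_re, Complex.add_im,
    Complex.mul_re, Complex.mul_im, Complex.I_re, Complex.I_im, Complex.neg_re, Complex.neg_im,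
    Complex.one_re, Complex.one_im, Complex.sq_abs]
  ring

variable {n : ℕ}

noncomputable def Sf (c : Fin n → ℂ) (A : Finset (Fin n)) (z : Fin n → Fin 4) : ℂ :=
  ∑ k ∈ A, wf (z k) * c k

def shiftEquiv (a : Fin n) (t : Fin 4) : (Fin n → Fin 4) ≃ (Fin n → Fin 4) where
  toFun z := Function.update z a (z a + t)
  invFun z := Function.update z a (z a - t)
  left_inv z := by
    funext i
    rcases eq_or_ne i a with rfl | hi
    · simp
    · simp [Function.update_of_ne hi]
  right_inv z := by
    funext i
    rcases eq_or_ne i a with rfl | hi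
    · simp
    · simp [Function.update_of_ne hi]

lemma Sf_update (c : Fin n → ℂ) (A : Finset (Fin n)) (a : Fin n) (ha : a ∉ A)
    (z : Fin n → Fin 4) (v : Fin 4) : Sf c A (Function.update z a v) = Sf c A z := by
  unfold Sf
  refine Finset.sum_congr rfl fun k hk => ?_
  have : k ≠ a := by rintro rfl; exact ha hk
  rw [Function.update_of_ne this]

lemma avg_shift (a : Fin n) (A : Finset (Fin n)) (ha : a ∉ A) (c : Fin n → ℂ)
    (G : Fin 4 → ℂ → ℝ) :
    (4:ℝ) * ∑ z : Fin n → Fin 4, G (z a) (Sf c A z)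
      = ∑ z : Fin n → Fin 4, ∑ t : Fin 4, G t (Sf c A z) := by
  have key : ∀ t : Fin 4, ∑ z : Fin n → Fin 4, G (z a + t) (Sf c A z)
      = ∑ z : Fin n → Fin 4, G (z a) (Sf c A z) := by
    intro t
    refine Fintype.sum_bijective (shiftEquiv a t) (shiftEquiv a t).bijective _ _ fun z => ?_
    simp only [shiftEquiv, Equiv.coe_fn_mk]
    rw [Sf_update c A a ha, Function.update_self]
  calc (4:ℝ) * ∑ z : Fin n → Fin 4, G (z a) (Sf c A z)
      = ∑ t : Fin 4, ∑ z : Fin n → Fin 4, G (z a + t) (Sf c A z) := by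
        simp only [key]; simp [Finset.sum_const, mul_comm]
    _ = ∑ z : Fin n → Fin 4, ∑ t : Fin 4, G (z a + t) (Sf c A z) := Finset.sum_comm
    _ = ∑ z : Fin n → Fin 4, ∑ t : Fin 4, G t (Sf c A z) := by
        refine Finset.sum_congr rfl fun z _ => ?_
        exact Fintype.sum_equiv (Equiv.addLeft (z a)) _ _ fun t => rfl

lemma moment2 (c : Fin n → ℂ) (A : Finset (Fin n)) :
    ∑ z : Fin n → Fin 4, Complex.abs (Sf c A z) ^ 2
      = (4:ℝ)^n * ∑ k ∈ A, Complex.abs (c k) ^ 2 := by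
  induction A using Finset.induction_on with
  | empty => simp [Sf]
  | @insert a A ha ih =>
    have hS : ∀ z : Fin n → Fin 4, Sf c (insert a A) z = wf (z a) * c a + Sf c A z := by
      intro z; unfold Sf; rw [Finset.sum_insert ha]
    have h4 : (4:ℝ) * ∑ z : Fin n → Fin 4, Complex.abs (Sf c (insert a A) z) ^ 2
        = ∑ z : Fin n → Fin 4, ∑ t : Fin 4, Complex.abs (wf t * c a + Sf c A z) ^ 2 := by
      simp only [hS]
      exact avg_shift a A ha c (fun t v => Complex.abs (wf t * c a + v) ^ 2)
    have h5 : ∑ z : Fin n → Fin 4, ∑ t : Fin 4, Complex.abs (wf t * c a + Sf c A z) ^ 2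
        = ∑ z : Fin n → Fin 4, 4 * (Complex.abs (c a) ^ 2 + Complex.abs (Sf c A z) ^ 2) :=
      Finset.sum_congr rfl fun z _ => sum4_sq _ _
    have hcard : (Fintype.card (Fin n → Fin 4) : ℝ) = (4:ℝ)^n := by
      simp [Fintype.card_fun]
    have expand : ∑ z : Fin n → Fin 4, 4 * (Complex.abs (c a) ^ 2 + Complex.abs (Sf c A z) ^ 2)
        = 4 * ((4:ℝ)^n * Complex.abs (c a) ^ 2
            + ∑ z : Fin n → Fin 4, Complex.abs (Sf c A z) ^ 2) := by
      rw [← Finset.mul_sum]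
      congr 1
      rw [Finset.sum_add_distrib, Finset.sum_const, Finset.card_univ, nsmul_eq_mul, hcard]
    have key := h4.trans (h5.trans expand)
    rw [Finset.sum_insert ha]
    rw [ih] at key
    linarith [key]

lemma moment4 (c : Fin n → ℂ) (A : Finset (Fin n)) :
    ∑ z : Fin n → Fin 4, Complex.abs (Sf c A z) ^ 4
      ≤ 2 * (4:ℝ)^n * (∑ k ∈ A, Complex.abs (c k) ^ 2) ^ 2 := by
  induction A using Finset.induction_on with
  | empty => simp [Sf]
  | @insert a A ha ih =>
    have hS : ∀ z : Fin n → Fin 4, Sf c (insert a A) z = wf (z a) * c a + Sf c A z := by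
      intro z; unfold Sf; rw [Finset.sum_insert ha]
    have h4 : (4:ℝ) * ∑ z : Fin n → Fin 4, Complex.abs (Sf c (insert a A) z) ^ 4
        = ∑ z : Fin n → Fin 4, ∑ t : Fin 4, Complex.abs (wf t * c a + Sf c A z) ^ 4 := by
      simp only [hS]
      exact avg_shift a A ha c (fun t v => Complex.abs (wf t * c a + v) ^ 4)
    have h5 : ∑ z : Fin n → Fin 4, ∑ t : Fin 4, Complex.abs (wf t * c a + Sf c A z) ^ 4
        = ∑ z : Fin n → Fin 4, 4 * (Complex.abs (c a) ^ 4
            + 4 * Complex.abs (c a) ^ 2 * Complex.abs (Sf c A z) ^ 2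
            + Complex.abs (Sf c A z) ^ 4) :=
      Finset.sum_congr rfl fun z _ => sum4_quad _ _
    have h2 := moment2 c A
    have hcard : (Fintype.card (Fin n → Fin 4) : ℝ) = (4:ℝ)^n := by
      simp [Fintype.card_fun]
    have expand : ∑ z : Fin n → Fin 4, 4 * (Complex.abs (c a) ^ 4
            + 4 * Complex.abs (c a) ^ 2 * Complex.abs (Sf c A z) ^ 2
            + Complex.abs (Sf c A z) ^ 4)
        = 4 * ((4:ℝ)^n * Complex.abs (c a) ^ 4
            + 4 * Complex.abs (c a) ^ 2 * ∑ z : Fin n → Fin 4, Complex.abs (Sf c A z) ^ 2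
            + ∑ z : Fin n → Fin 4, Complex.abs (Sf c A z) ^ 4) := by
      rw [← Finset.mul_sum]
      congr 1
      rw [Finset.sum_add_distrib, Finset.sum_add_distrib, Finset.sum_const, Finset.card_univ,
        nsmul_eq_mul, hcard, ← Finset.mul_sum]
    have key := h4.trans (h5.trans expand)
    rw [h2] at key
    have hnn : (0:ℝ) ≤ ∑ k ∈ A, Complex.abs (c k) ^ 2 :=
      Finset.sum_nonneg fun k _ => by positivity
    have h4n : (0:ℝ) < (4:ℝ)^n := by positivity
    rw [Finset.sum_insert ha]
    nlinarith [key, ih, sq_nonneg (Complex.abs (c a)), sq_nonneg (Complex.abs (c a) ^ 2),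
      mul_nonneg (mul_nonneg h4n.le (sq_nonneg (Complex.abs (c a)))) hnn]

lemma khinchin_L1 (c : Fin n → ℂ) :
    (4:ℝ)^n * Real.sqrt (∑ k, Complex.abs (c k) ^ 2)
      ≤ Real.sqrt 2 * ∑ z : Fin n → Fin 4, Complex.abs (Sf c Finset.univ z) := by
  set σ2 : ℝ := ∑ k, Complex.abs (c k) ^ 2 with hσ2
  have hσ2nn : 0 ≤ σ2 := Finset.sum_nonneg fun k _ => by positivity
  set N : ℝ := (4:ℝ)^n with hN
  have hNpos : 0 < N := by positivity
  set P1 : ℝ := ∑ z : Fin n → Fin 4, Complex.abs (Sf c Finset.univ z) with hP1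
  have hP1nn : 0 ≤ P1 := Finset.sum_nonneg fun z _ => by positivity
  set P3 : ℝ := ∑ z : Fin n → Fin 4, Complex.abs (Sf c Finset.univ z) ^ 3 with hP3
  have hP3nn : 0 ≤ P3 := Finset.sum_nonneg fun z _ => by positivity
  set P4 : ℝ := ∑ z : Fin n → Fin 4, Complex.abs (Sf c Finset.univ z) ^ 4 with hP4
  have hP4nn : 0 ≤ P4 := Finset.sum_nonneg fun z _ => by positivity
  have h2 : ∑ z : Fin n → Fin 4, Complex.abs (Sf c Finset.univ z) ^ 2 = N * σ2 :=
    moment2 c Finset.univ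
  have h4 : P4 ≤ 2 * N * σ2 ^ 2 := moment4 c Finset.univ
  rcases eq_or_lt_of_le hσ2nn with h0 | hσ2pos
  · rw [← h0, Real.sqrt_zero, mul_zero]
    positivity
  -- Cauchy-Schwarz 1 : (N σ2)^2 ≤ P1 * P3
  have cs1 : (N * σ2) ^ 2 ≤ P1 * P3 := by
    rw [← h2]
    have := Finset.sum_mul_sq_le_sq_mul_sq Finset.univ
      (fun z : Fin n → Fin 4 => Real.sqrt (Complex.abs (Sf c Finset.univ z)))
      (fun z : Fin n → Fin 4 => Complex.abs (Sf c Finset.univ z)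
          * Real.sqrt (Complex.abs (Sf c Finset.univ z)))
    calc (∑ z : Fin n → Fin 4, Complex.abs (Sf c Finset.univ z) ^ 2) ^ 2
        = (∑ z : Fin n → Fin 4, Real.sqrt (Complex.abs (Sf c Finset.univ z))
            * (Complex.abs (Sf c Finset.univ z)
              * Real.sqrt (Complex.abs (Sf c Finset.univ z)))) ^ 2 := by
          congr 1
          refine Finset.sum_congr rfl fun z _ => ?_
          have hs := Real.mul_self_sqrt (AbsoluteValue.nonneg Complex.abs (Sf c Finset.univ z))
          linear_combination (-(Complex.abs (Sf c Finset.univ z))) * hs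
      _ ≤ (∑ z : Fin n → Fin 4, Real.sqrt (Complex.abs (Sf c Finset.univ z)) ^ 2)
            * ∑ z : Fin n → Fin 4, (Complex.abs (Sf c Finset.univ z)
              * Real.sqrt (Complex.abs (Sf c Finset.univ z))) ^ 2 := this
      _ = P1 * P3 := by
          congr 1
          · refine Finset.sum_congr rfl fun z _ => ?_
            exact Real.sq_sqrt (AbsoluteValue.nonneg Complex.abs _)
          · refine Finset.sum_congr rfl fun z _ => ?_
            have hs := Real.mul_self_sqrt (AbsoluteValue.nonneg Complex.abs (Sf c Finset.univ z))
            linear_combination (Complex.abs (Sf c Finset.univ z) ^ 2) * hs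
  -- Cauchy-Schwarz 2 : P3^2 ≤ (N σ2) * P4
  have cs2 : P3 ^ 2 ≤ (N * σ2) * P4 := by
    rw [← h2]
    have := Finset.sum_mul_sq_le_sq_mul_sq Finset.univ
      (fun z : Fin n → Fin 4 => Complex.abs (Sf c Finset.univ z))
      (fun z : Fin n → Fin 4 => Complex.abs (Sf c Finset.univ z) ^ 2)
    calc P3 ^ 2 = (∑ z : Fin n → Fin 4, Complex.abs (Sf c Finset.univ z)
          * Complex.abs (Sf c Finset.univ z) ^ 2) ^ 2 := by
          congr 1; exact Finset.sum_congr rfl fun z _ => by ring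
      _ ≤ _ := this
      _ = _ := by
          congr 1
          refine Finset.sum_congr rfl fun z _ => by ring
  -- combine
  have hNσ : 0 < N * σ2 := mul_pos hNpos hσ2pos
  have step1 : (N * σ2) ^ 4 ≤ P1 ^ 2 * ((N * σ2) * P4) := by
    calc (N * σ2) ^ 4 = ((N * σ2) ^ 2) ^ 2 := by ring
      _ ≤ (P1 * P3) ^ 2 := by
          apply pow_le_pow_left₀ (sq_nonneg _) cs1
      _ = P1 ^ 2 * P3 ^ 2 := by ring
      _ ≤ P1 ^ 2 * ((N * σ2) * P4) := by
          exact mul_le_mul_of_nonneg_left cs2 (sq_nonneg _)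
  have step2 : (N * σ2) ^ 3 ≤ P1 ^ 2 * P4 := by
    have := le_of_mul_le_mul_right (by
      calc (N * σ2) ^ 3 * (N * σ2) = (N * σ2) ^ 4 := by ring
        _ ≤ P1 ^ 2 * ((N * σ2) * P4) := step1
        _ = P1 ^ 2 * P4 * (N * σ2) := by ring) hNσ
    exact this
  have step3 : N ^ 2 * σ2 ≤ 2 * P1 ^ 2 := by
    have h := step2.trans (mul_le_mul_of_nonneg_left h4 (sq_nonneg P1))
    have hd : 0 < N * σ2 ^ 2 := by positivity
    have := le_of_mul_le_mul_right (by
      calc (N ^ 2 * σ2) * (N * σ2 ^ 2) = (N * σ2) ^ 3 := by ring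
        _ ≤ P1 ^ 2 * (2 * N * σ2 ^ 2) := h
        _ = (2 * P1 ^ 2) * (N * σ2 ^ 2) := by ring) hd
    exact this
  -- conclude
  have lhs_sq : (N * Real.sqrt σ2) ^ 2 = N ^ 2 * σ2 := by
    rw [mul_pow, Real.sq_sqrt hσ2nn]
  have rhs_sq : (Real.sqrt 2 * P1) ^ 2 = 2 * P1 ^ 2 := by
    rw [mul_pow, Real.sq_sqrt (by norm_num : (0:ℝ) ≤ 2)]
  have : (N * Real.sqrt σ2) ^ 2 ≤ (Real.sqrt 2 * P1) ^ 2 := by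
    rw [lhs_sq, rhs_sq]; exact step3
  exact le_of_pow_le_pow_left₀ (by norm_num) (by positivity) this

noncomputable def csgn (u : ℂ) : ℂ := if u = 0 then 1 else (starRingEnd ℂ) u / Complex.abs u

lemma csgn_abs_le (u : ℂ) : Complex.abs (csgn u) ≤ 1 := by
  unfold csgn
  split_ifs with h
  · simp
  · rw [map_div₀, Complex.abs_conj, Complex.abs_ofReal,
      _root_.abs_of_nonneg (AbsoluteValue.nonneg _ u), div_self (Complex.abs.ne_zero h)]

lemma csgn_mul (u : ℂ) : csgn u * u = (Complex.abs u : ℂ) := by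
  unfold csgn
  split_ifs with h
  · simp [h]
  · have hne : ((Complex.abs u : ℝ) : ℂ) ≠ 0 := by
      exact_mod_cast Complex.abs.ne_zero h
    field_simp
    rw [mul_comm, Complex.mul_conj, Complex.normSq_eq_abs]
    push_cast
    ring

lemma mixed_norm (c : Fin n → Fin n → ℂ) (C : ℝ)
    (H : ∀ x y : Fin n → ℂ, (∀ j, Complex.abs (x j) ≤ 1) → (∀ k, Complex.abs (y k) ≤ 1) →
      Complex.abs (∑ j, ∑ k, x j * y k * c j k) ≤ C) :
    ∑ j, Real.sqrt (∑ k, Complex.abs (c j k) ^ 2) ≤ Real.sqrt 2 * C := by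
  have key : ∀ z : Fin n → Fin 4, ∑ j, Complex.abs (Sf (c j) Finset.univ z) ≤ C := by
    intro z
    set x : Fin n → ℂ := fun j => csgn (Sf (c j) Finset.univ z) with hx
    set y : Fin n → ℂ := fun k => wf (z k) with hy
    have hxb : ∀ j, Complex.abs (x j) ≤ 1 := fun j => csgn_abs_le _
    have hyb : ∀ k, Complex.abs (y k) ≤ 1 := fun k => le_of_eq (wf_abs _)
    have hsum : ∑ j, ∑ k, x j * y k * c j k
        = ((∑ j, Complex.abs (Sf (c j) Finset.univ z) : ℝ) : ℂ) := by
      push_cast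
      refine Finset.sum_congr rfl fun j _ => ?_
      have : ∑ k, x j * y k * c j k = x j * Sf (c j) Finset.univ z := by
        unfold Sf
        rw [Finset.mul_sum]
        exact Finset.sum_congr rfl fun k _ => by ring
      rw [this, csgn_mul]
    have := H x y hxb hyb
    rw [hsum] at this
    rwa [Complex.abs_ofReal, abs_of_nonneg (Finset.sum_nonneg fun j _ => by positivity)] at this
  have upper : ∑ z : Fin n → Fin 4, ∑ j, Complex.abs (Sf (c j) Finset.univ z)
      ≤ (4:ℝ)^n * C := by
    calc ∑ z : Fin n → Fin 4, ∑ j, Complex.abs (Sf (c j) Finset.univ z)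
        ≤ ∑ _z : Fin n → Fin 4, C := Finset.sum_le_sum fun z _ => key z
      _ = (4:ℝ)^n * C := by
          rw [Finset.sum_const, Finset.card_univ, nsmul_eq_mul]
          congr 1
          simp [Fintype.card_fun]
  have lower : (4:ℝ)^n * ∑ j, Real.sqrt (∑ k, Complex.abs (c j k) ^ 2)
      ≤ Real.sqrt 2 * ∑ z : Fin n → Fin 4, ∑ j, Complex.abs (Sf (c j) Finset.univ z) := by
    rw [Finset.sum_comm, Finset.mul_sum, Finset.mul_sum]
    exact Finset.sum_le_sum fun j _ => khinchin_L1 (c j)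
  have h4n : (0:ℝ) < (4:ℝ)^n := by positivity
  have hs2 : (0:ℝ) ≤ Real.sqrt 2 := Real.sqrt_nonneg 2
  have := lower.trans (mul_le_mul_of_nonneg_left upper hs2)
  calc ∑ j, Real.sqrt (∑ k, Complex.abs (c j k) ^ 2)
      = ((4:ℝ)^n * ∑ j, Real.sqrt (∑ k, Complex.abs (c j k) ^ 2)) / (4:ℝ)^n := by
        field_simp
    _ ≤ (Real.sqrt 2 * ((4:ℝ)^n * C)) / (4:ℝ)^n := by
        gcongr
    _ = Real.sqrt 2 * C := by field_simp

lemma minkowski_sq (b : Fin n → Fin n → ℝ) (hb : ∀ j k, 0 ≤ b j k) :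
    ∑ j, (∑ k, b j k) ^ 2 ≤ (∑ k, Real.sqrt (∑ j, b j k ^ 2)) ^ 2 := by
  set t : Fin n → ℝ := fun j => ∑ k, b j k with ht
  set K : ℝ := ∑ k, Real.sqrt (∑ j, b j k ^ 2) with hK
  have hKnn : 0 ≤ K := Finset.sum_nonneg fun k _ => Real.sqrt_nonneg _
  set T2 : ℝ := ∑ j, t j ^ 2 with hT2
  have hT2nn : 0 ≤ T2 := Finset.sum_nonneg fun j _ => sq_nonneg _
  have step : T2 ≤ Real.sqrt T2 * K := by
    calc T2 = ∑ j, t j * t j := Finset.sum_congr rfl fun j _ => sq (t j) ▸ by ring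
      _ = ∑ j, ∑ k, t j * b j k := Finset.sum_congr rfl fun j _ => by
          rw [← Finset.mul_sum]
      _ = ∑ k, ∑ j, t j * b j k := Finset.sum_comm
      _ ≤ ∑ k, Real.sqrt (∑ j, t j ^ 2) * Real.sqrt (∑ j, b j k ^ 2) :=
          Finset.sum_le_sum fun k _ => Real.sum_mul_le_sqrt_mul_sqrt _ _ _
      _ = Real.sqrt T2 * K := by rw [hK, Finset.mul_sum]
  rcases eq_or_lt_of_le hT2nn with h0 | hpos
  · rw [← h0]; positivity
  · have hsq : Real.sqrt T2 * Real.sqrt T2 = T2 := Real.mul_self_sqrt hT2nn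
    have hsqpos : 0 < Real.sqrt T2 := Real.sqrt_pos.mpr hpos
    have h1 : Real.sqrt T2 ≤ K := by
      have := step
      rw [← hsq] at this
      exact le_of_mul_le_mul_left (by linarith [this]) hsqpos
    calc T2 = Real.sqrt T2 ^ 2 := (Real.sq_sqrt hT2nn).symm
      _ ≤ K ^ 2 := pow_le_pow_left₀ hsqpos.le h1 2

lemma littlewood_interp (b : Fin n → Fin n → ℝ) (hb : ∀ j k, 0 ≤ b j k) :
    ∑ j, ∑ k, (b j k) ^ ((4:ℝ)/3)
      ≤ (∑ j, Real.sqrt (∑ k, b j k ^ 2)) ^ ((2:ℝ)/3)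
        * (∑ k, Real.sqrt (∑ j, b j k ^ 2)) ^ ((2:ℝ)/3) := by
  set r : Fin n → ℝ := fun j => Real.sqrt (∑ k, b j k ^ 2) with hr
  set t : Fin n → ℝ := fun j => ∑ k, b j k with ht
  set R : ℝ := ∑ j, r j with hR
  set K : ℝ := ∑ k, Real.sqrt (∑ j, b j k ^ 2) with hK
  have hRnn : 0 ≤ R := Finset.sum_nonneg fun j _ => Real.sqrt_nonneg _
  have hKnn : 0 ≤ K := Finset.sum_nonneg fun k _ => Real.sqrt_nonneg _
  have hrnn : ∀ j, 0 ≤ r j := fun j => Real.sqrt_nonneg _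
  have htnn : ∀ j, 0 ≤ t j := fun j => Finset.sum_nonneg fun k _ => hb j k
  -- Step A : per-row Hölder
  have stepA : ∀ j, ∑ k, (b j k) ^ ((4:ℝ)/3) ≤ r j ^ ((2:ℝ)/3) * t j ^ ((2:ℝ)/3) := by
    intro j
    have hpq : Real.HolderConjugate 3 (3/2) := ⟨by norm_num, by norm_num, by norm_num⟩
    have holder := Real.inner_le_Lp_mul_Lq (s := Finset.univ)
      (fun k => (b j k) ^ ((2:ℝ)/3)) (fun k => (b j k) ^ ((2:ℝ)/3)) hpq
    have e1 : ∀ k, (b j k) ^ ((2:ℝ)/3) * (b j k) ^ ((2:ℝ)/3) = (b j k) ^ ((4:ℝ)/3) := by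
      intro k
      rw [← Real.rpow_add' (hb j k) (by norm_num)]
      norm_num
    have e2 : ∀ k, |(b j k) ^ ((2:ℝ)/3)| ^ (3:ℝ) = b j k ^ 2 := by
      intro k
      rw [abs_of_nonneg (Real.rpow_nonneg (hb j k) _), ← Real.rpow_natCast (b j k) 2,
        ← Real.rpow_mul (hb j k)]
      norm_num
    have e3 : ∀ k, |(b j k) ^ ((2:ℝ)/3)| ^ ((3:ℝ)/2) = b j k := by
      intro k
      rw [abs_of_nonneg (Real.rpow_nonneg (hb j k) _), ← Real.rpow_mul (hb j k)]
      norm_num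
    simp only [e1, e2, e3] at holder
    calc ∑ k, (b j k) ^ ((4:ℝ)/3)
        ≤ (∑ k, b j k ^ 2) ^ ((1:ℝ)/3) * (∑ k, b j k) ^ (1/(3/2) : ℝ) := by
          convert holder using 3 <;> norm_num
      _ = r j ^ ((2:ℝ)/3) * t j ^ ((2:ℝ)/3) := by
          congr 1
          · have hsnn : (0:ℝ) ≤ ∑ k, b j k ^ 2 := Finset.sum_nonneg fun k _ => sq_nonneg _
            show (∑ k, b j k ^ 2) ^ ((1:ℝ)/3) = Real.sqrt (∑ k, b j k ^ 2) ^ ((2:ℝ)/3)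
            rw [Real.sqrt_eq_rpow, ← Real.rpow_mul hsnn]
            norm_num
          · norm_num; rfl
  -- Step B : Hölder in j
  have stepB : ∑ j, r j ^ ((2:ℝ)/3) * t j ^ ((2:ℝ)/3)
      ≤ R ^ ((2:ℝ)/3) * (∑ j, t j ^ 2) ^ ((1:ℝ)/3) := by
    have hpq : Real.HolderConjugate (3/2) 3 := ⟨by norm_num, by norm_num, by norm_num⟩
    have holder := Real.inner_le_Lp_mul_Lq (s := Finset.univ)
      (fun j => r j ^ ((2:ℝ)/3)) (fun j => t j ^ ((2:ℝ)/3)) hpq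
    have e1 : ∀ j, |r j ^ ((2:ℝ)/3)| ^ ((3:ℝ)/2) = r j := by
      intro j
      rw [abs_of_nonneg (Real.rpow_nonneg (hrnn j) _), ← Real.rpow_mul (hrnn j)]
      norm_num
    have e2 : ∀ j, |t j ^ ((2:ℝ)/3)| ^ (3:ℝ) = t j ^ 2 := by
      intro j
      rw [abs_of_nonneg (Real.rpow_nonneg (htnn j) _), ← Real.rpow_natCast (t j) 2,
        ← Real.rpow_mul (htnn j)]
      norm_num
    simp only [e1, e2] at holder
    calc ∑ j, r j ^ ((2:ℝ)/3) * t j ^ ((2:ℝ)/3)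
        ≤ (∑ j, r j) ^ (1/(3/2) : ℝ) * (∑ j, t j ^ 2) ^ ((1:ℝ)/3) := by
          convert holder using 3 <;> norm_num
      _ = R ^ ((2:ℝ)/3) * (∑ j, t j ^ 2) ^ ((1:ℝ)/3) := by
          rw [hR]; norm_num
  -- Step C : Minkowski
  have stepC : (∑ j, t j ^ 2) ^ ((1:ℝ)/3) ≤ K ^ ((2:ℝ)/3) := by
    have := minkowski_sq b hb
    have h1 : (∑ j, t j ^ 2) ^ ((1:ℝ)/3) ≤ (K ^ 2) ^ ((1:ℝ)/3) :=
      Real.rpow_le_rpow (Finset.sum_nonneg fun j _ => sq_nonneg _) this (by norm_num)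
    calc (∑ j, t j ^ 2) ^ ((1:ℝ)/3) ≤ (K ^ 2) ^ ((1:ℝ)/3) := h1
      _ = K ^ ((2:ℝ)/3) := by
          rw [← Real.rpow_natCast K 2, ← Real.rpow_mul hKnn]
          norm_num
  calc ∑ j, ∑ k, (b j k) ^ ((4:ℝ)/3)
      ≤ ∑ j, r j ^ ((2:ℝ)/3) * t j ^ ((2:ℝ)/3) := Finset.sum_le_sum fun j _ => stepA j
    _ ≤ R ^ ((2:ℝ)/3) * (∑ j, t j ^ 2) ^ ((1:ℝ)/3) := stepB
    _ ≤ R ^ ((2:ℝ)/3) * K ^ ((2:ℝ)/3) :=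
        mul_le_mul_of_nonneg_left stepC (Real.rpow_nonneg hRnn _)

theorem stmt9 (n : ℕ) (hn : 0 < n)
    (T : ContinuousMultilinearMap ℂ (fun _ : Fin 2 => PiLp ⊤ (fun _ : Fin n => ℂ)) ℂ) :
    (∑ j : Fin n, ∑ k : Fin n,
        ‖T ![unitVecInf j, unitVecInf k]‖ ^ ((4 : ℝ) / 3)) ^ ((3 : ℝ) / 4)
      ≤ Real.sqrt 2 * ‖T‖ := by
  set a : Fin n → Fin n → ℂ := fun j k => T ![unitVecInf j, unitVecInf k] with ha
  set b : Fin n → Fin n → ℝ := fun j k => Complex.abs (a j k) with hb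
  have hbnn : ∀ j k, 0 ≤ b j k := fun j k => AbsoluteValue.nonneg _ _
  have hTnn : (0:ℝ) ≤ ‖T‖ := norm_nonneg T
  have Hrow : ∀ x y : Fin n → ℂ, (∀ j, Complex.abs (x j) ≤ 1) → (∀ k, Complex.abs (y k) ≤ 1) →
      Complex.abs (∑ j, ∑ k, x j * y k * a j k) ≤ ‖T‖ := by
    intro x y hx hy
    rw [← bilin_expand T x y]
    set vx := (WithLp.equiv ⊤ (∀ _ : Fin n, ℂ)).symm x with hvx
    set vy := (WithLp.equiv ⊤ (∀ _ : Fin n, ℂ)).symm y with hvy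
    have h1 : ‖vx‖ ≤ 1 := norm_le_one x hn hx
    have h2 : ‖vy‖ ≤ 1 := norm_le_one y hn hy
    calc Complex.abs (T ![vx, vy]) = ‖T ![vx, vy]‖ := (Complex.norm_eq_abs _).symm
      _ ≤ ‖T‖ * ∏ i, ‖(![vx, vy] : Fin 2 → PiLp ⊤ (fun _ : Fin n => ℂ)) i‖ := T.le_opNorm _
      _ = ‖T‖ * (‖vx‖ * ‖vy‖) := by
          rw [Fin.prod_univ_two]
          simp
      _ ≤ ‖T‖ * 1 := by
          apply mul_le_mul_of_nonneg_left _ hTnn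
          exact mul_le_one₀ h1 (norm_nonneg _) h2
      _ = ‖T‖ := mul_one _
  have Hcol : ∀ x y : Fin n → ℂ, (∀ j, Complex.abs (x j) ≤ 1) → (∀ k, Complex.abs (y k) ≤ 1) →
      Complex.abs (∑ j, ∑ k, x j * y k * a k j) ≤ ‖T‖ := by
    intro x y hx hy
    have := Hrow y x hy hx
    have e : ∑ j, ∑ k, x j * y k * a k j = ∑ j, ∑ k, y j * x k * a j k := by
      rw [Finset.sum_comm]
      exact Finset.sum_congr rfl fun j _ => Finset.sum_congr rfl fun k _ => by ring
    rw [e]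
    exact this
  have hR : ∑ j, Real.sqrt (∑ k, Complex.abs (a j k) ^ 2) ≤ Real.sqrt 2 * ‖T‖ :=
    mixed_norm a ‖T‖ Hrow
  have hK : ∑ k, Real.sqrt (∑ j, Complex.abs (a j k) ^ 2) ≤ Real.sqrt 2 * ‖T‖ :=
    mixed_norm (fun j k => a k j) ‖T‖ Hcol
  have interp := littlewood_interp b hbnn
  set R : ℝ := ∑ j, Real.sqrt (∑ k, b j k ^ 2) with hRdef
  set K : ℝ := ∑ k, Real.sqrt (∑ j, b j k ^ 2) with hKdef
  have hRnn : 0 ≤ R := Finset.sum_nonneg fun j _ => Real.sqrt_nonneg _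
  have hKnn : 0 ≤ K := Finset.sum_nonneg fun k _ => Real.sqrt_nonneg _
  have hRb : R ≤ Real.sqrt 2 * ‖T‖ := hR
  have hKb : K ≤ Real.sqrt 2 * ‖T‖ := hK
  have hCnn : (0:ℝ) ≤ Real.sqrt 2 * ‖T‖ := by positivity
  have hS : ∑ j, ∑ k, b j k ^ ((4:ℝ)/3) ≤ (Real.sqrt 2 * ‖T‖) ^ ((4:ℝ)/3) := by
    calc ∑ j, ∑ k, b j k ^ ((4:ℝ)/3) ≤ R ^ ((2:ℝ)/3) * K ^ ((2:ℝ)/3) := interp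
      _ ≤ (Real.sqrt 2 * ‖T‖) ^ ((2:ℝ)/3) * (Real.sqrt 2 * ‖T‖) ^ ((2:ℝ)/3) := by
          apply mul_le_mul
          · exact Real.rpow_le_rpow hRnn hRb (by norm_num)
          · exact Real.rpow_le_rpow hKnn hKb (by norm_num)
          · exact Real.rpow_nonneg hKnn _
          · exact Real.rpow_nonneg hCnn _
      _ = (Real.sqrt 2 * ‖T‖) ^ ((4:ℝ)/3) := by
          rw [← Real.rpow_add' hCnn (by norm_num : ((2:ℝ)/3 + (2:ℝ)/3) ≠ 0)]
          norm_num
  have hSnn : 0 ≤ ∑ j, ∑ k, b j k ^ ((4:ℝ)/3) :=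
    Finset.sum_nonneg fun j _ => Finset.sum_nonneg fun k _ => Real.rpow_nonneg (hbnn j k) _
  have final : (∑ j, ∑ k, b j k ^ ((4:ℝ)/3)) ^ ((3:ℝ)/4) ≤ Real.sqrt 2 * ‖T‖ := by
    calc (∑ j, ∑ k, b j k ^ ((4:ℝ)/3)) ^ ((3:ℝ)/4)
        ≤ ((Real.sqrt 2 * ‖T‖) ^ ((4:ℝ)/3)) ^ ((3:ℝ)/4) :=
          Real.rpow_le_rpow hSnn hS (by norm_num)
      _ = Real.sqrt 2 * ‖T‖ := by
          rw [← Real.rpow_mul hCnn]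
          norm_num
  exact final
end

section
/- Let s ≥ 1 be an integer, p_1,…,p_s ∈ (1,∞] with λ = 1/p_1 + ⋯ + 1/p_s satisfying 1/2 ≤ λ < 1, and let C ≥ 1. Suppose that for every positive integer n and every (s+1)-linear form S : ℓ_{p_1}^n × ⋯ × ℓ_{p_s}^n × ℓ_∞^n → 𝕂 one has (∑_{j_1,…,j_{s+1}=1}^n |S(e_{j_1},…,e_{j_{s+1}})|^{1/(1−λ)})^{1−λ} ≤ C ‖S‖. Then for every p_{s+1} ∈ (1,∞] with λ + 1/p_{s+1} < 1, every positive integer n and every (s+1)-linear form T : ℓ_{p_1}^n × ⋯ × ℓ_{p_s}^n × ℓ_{p_{s+1}}^n → 𝕂, (∑_{j_1,…,j_{s+1}=1}^n |T(e_{j_1},…,e_{j_{s+1}})|^{1/(1−λ−1/p_{s+1})})^{1−λ−1/p_{s+1}} ≤ C ‖T‖. -/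
open scoped ENNReal

open Finset in
lemma sum_rpow_le_rpow_sum' {ι : Type*} [Fintype ι] {r : ℝ} (hr : 1 ≤ r)
    (x : ι → ℝ) (hx : ∀ i, 0 ≤ x i) :
    ∑ i, x i ^ r ≤ (∑ i, x i) ^ r := by
  have hS : 0 ≤ ∑ i, x i := Finset.sum_nonneg fun i _ => hx i
  have hr0 : 0 < r := lt_of_lt_of_le one_pos hr
  have step : ∑ i, x i ^ r ≤ ∑ i, (∑ j, x j) ^ (r - 1) * x i := by
    refine Finset.sum_le_sum fun i _ => ?_
    rcases eq_or_lt_of_le (hx i) with h0 | h0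
    · rw [← h0, Real.zero_rpow hr0.ne', mul_zero]
    · have hxi : x i ≤ ∑ j, x j := Finset.single_le_sum (fun j _ => hx j) (Finset.mem_univ i)
      have h1 : x i ^ r = x i ^ (r - 1) * x i := by
        rw [← Real.rpow_add_one h0.ne' (r - 1), sub_add_cancel]
      rw [h1]
      exact mul_le_mul_of_nonneg_right
        (Real.rpow_le_rpow (hx i) hxi (by linarith)) (hx i)
  rw [← Finset.mul_sum] at step
  refine step.trans (le_of_eq ?_)
  rcases eq_or_lt_of_le hS with h0 | h0
  · rw [← h0, mul_zero, Real.zero_rpow hr0.ne']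
  · rw [← Real.rpow_add_one h0.ne' (r - 1), sub_add_cancel]

lemma extrapolate' {n : ℕ} {ι : Type*} [Fintype ι]
    {μ ρ P M : ℝ} (hμ : 0 < μ) (hρ : μ ≤ ρ) (hP : 0 < P)
    (hrel : 1 / μ = 1 / ρ + 1 / P)
    (t : ι → Fin n → ℝ) (ht : ∀ j k, 0 ≤ t j k) (hM : 0 ≤ M)
    (h : ∀ a : Fin n → ℝ, (∀ k, 0 ≤ a k) → ∑ k, a k ^ P ≤ 1 →
      (∑ k, ∑ j, (a k * t j k) ^ μ) ^ (1 / μ) ≤ M) :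
    (∑ k, ∑ j, t j k ^ ρ) ^ (1 / ρ) ≤ M := by
  have hρ0 : 0 < ρ := hμ.trans_le hρ
  set c : Fin n → ℝ := fun k => ∑ j, t j k ^ μ with hc_def
  have hc : ∀ k, 0 ≤ c k := fun k => Finset.sum_nonneg fun j _ => Real.rpow_nonneg (ht j k) μ
  set e : ℝ := ρ / μ with he_def
  have he1 : 1 ≤ e := (one_le_div hμ).2 hρ
  set D : ℝ := ∑ k, c k ^ e with hD_def
  have hD0 : 0 ≤ D := Finset.sum_nonneg fun k _ => Real.rpow_nonneg (hc k) e
  have hμρ : μ * e = ρ := by rw [he_def]; field_simp [hμ.ne']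
  have stepA : ∑ k, ∑ j, t j k ^ ρ ≤ D := by
    refine Finset.sum_le_sum fun k _ => ?_
    calc ∑ j, t j k ^ ρ = ∑ j, (t j k ^ μ) ^ e :=
        Finset.sum_congr rfl fun j _ => by rw [← Real.rpow_mul (ht j k), hμρ]
      _ ≤ (∑ j, t j k ^ μ) ^ e :=
        sum_rpow_le_rpow_sum' he1 _ fun j => Real.rpow_nonneg (ht j k) μ
  have hsum_nonneg : 0 ≤ ∑ k, ∑ j, t j k ^ ρ :=
    Finset.sum_nonneg fun k _ => Finset.sum_nonneg fun j _ => Real.rpow_nonneg (ht j k) ρ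
  rcases eq_or_lt_of_le hD0 with hD | hD
  · have h0 : ∑ k, ∑ j, t j k ^ ρ = 0 := le_antisymm (hD ▸ stepA) hsum_nonneg
    rw [h0, Real.zero_rpow (one_div_ne_zero hρ0.ne')]
    exact hM
  · set a : Fin n → ℝ := fun k => (c k ^ e / D) ^ (1 / P) with ha_def
    have hXnn : ∀ k, 0 ≤ c k ^ e / D := fun k => div_nonneg (Real.rpow_nonneg (hc k) e) hD0
    have ha : ∀ k, 0 ≤ a k := fun k => Real.rpow_nonneg (hXnn k) _
    have haP : ∑ k, a k ^ P = 1 := by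
      have h1 : ∀ k, a k ^ P = c k ^ e / D := by
        intro k
        show ((c k ^ e / D) ^ (1 / P)) ^ P = c k ^ e / D
        rw [← Real.rpow_mul (hXnn k), one_div_mul_cancel hP.ne', Real.rpow_one]
      rw [Finset.sum_congr rfl fun k _ => h1 k, ← Finset.sum_div, ← hD_def, div_self hD.ne']
    have hkey : ∑ k, ∑ j, (a k * t j k) ^ μ = D ^ (1 - μ / P) := by
      have h2 : ∀ k, ∑ j, (a k * t j k) ^ μ = c k ^ e / D ^ (μ / P) := by
        intro k
        have haμ : a k ^ μ = c k ^ (ρ / P) / D ^ (μ / P) := by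
          show ((c k ^ e / D) ^ (1 / P)) ^ μ = _
          rw [← Real.rpow_mul (hXnn k), Real.div_rpow (Real.rpow_nonneg (hc k) e) hD0,
            ← Real.rpow_mul (hc k)]
          congr 2
          · rw [he_def]
            field_simp [hμ.ne', hP.ne']
          · field_simp
        calc ∑ j, (a k * t j k) ^ μ = ∑ j, a k ^ μ * t j k ^ μ :=
            Finset.sum_congr rfl fun j _ => Real.mul_rpow (ha k) (ht j k)
          _ = a k ^ μ * c k := by rw [← Finset.mul_sum]
          _ = c k ^ (ρ / P) * c k / D ^ (μ / P) := by rw [haμ]; ring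
          _ = c k ^ e / D ^ (μ / P) := by
            congr 1
            have hee : e = ρ / P + 1 := by
              have h3 : ρ * (1 / μ) = ρ * (1 / ρ + 1 / P) := by rw [hrel]
              rw [mul_add, mul_one_div, mul_one_div, div_self hρ0.ne'] at h3
              rw [he_def]
              rw [mul_one_div] at h3
              linarith
            rcases eq_or_lt_of_le (hc k) with h4 | h4
            · rw [← h4, Real.zero_rpow (by positivity : ρ / P ≠ 0), zero_mul,
                Real.zero_rpow (by rw [hee]; positivity)]
            · rw [hee, Real.rpow_add_one h4.ne' (ρ / P)]
      rw [Finset.sum_congr rfl fun k _ => h2 k, ← Finset.sum_div, ← hD_def,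
        Real.rpow_sub hD, Real.rpow_one]
    have hfin := h a ha haP.le
    rw [hkey, ← Real.rpow_mul hD0] at hfin
    have hexp : (1 - μ / P) * (1 / μ) = 1 / ρ := by
      have h6 : μ / P * (1 / μ) = 1 / P := by
        rw [div_mul_div_comm, mul_one, mul_comm P μ, ← div_div, div_self hμ.ne']
      have h5 : (1 - μ / P) * (1 / μ) = 1 / μ - 1 / P := by
        rw [sub_mul, one_mul, h6]
      rw [h5, hrel]; ring
    rw [hexp] at hfin
    calc (∑ k, ∑ j, t j k ^ ρ) ^ (1 / ρ) ≤ D ^ (1 / ρ) :=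
        Real.rpow_le_rpow hsum_nonneg stepA (by positivity)
      _ ≤ M := hfin


lemma idPiLp (𝕂 : Type*) [RCLike 𝕂] {n : ℕ} (r r' : ℝ≥0∞) (h : r = r')
    [Fact (1 ≤ r)] [Fact (1 ≤ r')] :
    ∃ f : PiLp r (fun _ : Fin n => 𝕂) →L[𝕂] PiLp r' (fun _ : Fin n => 𝕂),
      ‖f‖ ≤ 1 ∧ ∀ j, f (unitVec 𝕂 r j) = unitVec 𝕂 r' j := by
  subst h
  exact ⟨ContinuousLinearMap.id 𝕂 _, ContinuousLinearMap.norm_id_le, fun j => rfl⟩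

lemma diagPiLp (𝕂 : Type*) [RCLike 𝕂] {n : ℕ} (r rt : ℝ≥0∞) (hr : r = ⊤)
    (h1 : 1 < rt) (hne : rt ≠ ⊤) [Fact (1 ≤ r)] [Fact (1 ≤ rt)]
    (a : Fin n → ℝ) (ha : ∀ k, 0 ≤ a k) (haP : ∑ k, a k ^ rt.toReal ≤ 1) :
    ∃ f : PiLp r (fun _ : Fin n => 𝕂) →L[𝕂] PiLp rt (fun _ : Fin n => 𝕂),
      ‖f‖ ≤ 1 ∧ ∀ j, f (unitVec 𝕂 r j) = (a j : 𝕂) • unitVec 𝕂 rt j := by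
  subst hr
  have hP : 0 < rt.toReal := ENNReal.toReal_pos (by positivity) hne
  set L : PiLp ⊤ (fun _ : Fin n => 𝕂) →ₗ[𝕂] PiLp rt (fun _ : Fin n => 𝕂) :=
    { toFun := fun x => (WithLp.equiv rt (∀ _ : Fin n, 𝕂)).symm
        (fun k => (a k : 𝕂) * x k)
      map_add' := by
        intro x y
        ext k
        simp [mul_add]
      map_smul' := by
        intro c x
        ext k
        simp [mul_comm, mul_assoc] } with hL
  have hbound : ∀ x : PiLp ⊤ (fun _ : Fin n => 𝕂), ‖L x‖ ≤ 1 * ‖x‖ := by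
    intro x
    rw [one_mul]
    have hxk : ∀ k, ‖x k‖ ≤ ‖x‖ := by
      intro k
      rw [PiLp.norm_eq_ciSup]
      exact le_ciSup (f := fun k => ‖x k‖) (Set.Finite.bddAbove (Set.finite_range _)) k
    have hx0 : (0:ℝ) ≤ ‖x‖ := norm_nonneg x
    rw [PiLp.norm_eq_sum hP]
    have step1 : ∑ k, ‖(L x) k‖ ^ rt.toReal ≤ (∑ k, a k ^ rt.toReal) * ‖x‖ ^ rt.toReal := by
      rw [Finset.sum_mul]
      refine Finset.sum_le_sum fun k _ => ?_
      have h2 : ‖(L x) k‖ = a k * ‖x k‖ := by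
        simp [hL, PiLp.toLp_apply, norm_mul, RCLike.norm_ofReal,
          abs_of_nonneg (ha k)]
      rw [h2, Real.mul_rpow (ha k) (norm_nonneg _)]
      exact mul_le_mul_of_nonneg_left
        (Real.rpow_le_rpow (norm_nonneg _) (hxk k) hP.le)
        (Real.rpow_nonneg (ha k) _)
    have step2 : (∑ k, a k ^ rt.toReal) * ‖x‖ ^ rt.toReal ≤ ‖x‖ ^ rt.toReal := by
      calc (∑ k, a k ^ rt.toReal) * ‖x‖ ^ rt.toReal ≤ 1 * ‖x‖ ^ rt.toReal :=
          mul_le_mul_of_nonneg_right haP (Real.rpow_nonneg hx0 _)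
        _ = ‖x‖ ^ rt.toReal := one_mul _
    calc (∑ k, ‖(L x) k‖ ^ rt.toReal) ^ (1 / rt.toReal)
        ≤ (‖x‖ ^ rt.toReal) ^ (1 / rt.toReal) :=
          Real.rpow_le_rpow (Finset.sum_nonneg fun k _ => Real.rpow_nonneg (norm_nonneg _) _)
            (step1.trans step2) (by positivity)
      _ = ‖x‖ := by rw [← Real.rpow_mul hx0, mul_one_div, div_self hP.ne', Real.rpow_one]
  refine ⟨L.mkContinuous 1 hbound, LinearMap.mkContinuous_norm_le L zero_le_one hbound, ?_⟩
  intro j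
  ext k
  by_cases hkj : k = j <;>
    simp [hL, unitVec, Pi.single_apply, hkj, RCLike.real_smul_eq_coe_mul]


theorem stmt12 (𝕂 : Type*) [RCLike 𝕂] (s : ℕ) (hs : 1 ≤ s)
    (p : Fin s → ℝ≥0∞) (hp : ∀ i, 1 < p i)
    (hlo : (1 : ℝ) / 2 ≤ ∑ i, (1 / p i).toReal)
    (hhi : ∑ i, (1 / p i).toReal < 1)
    (C : ℝ) (hC : 1 ≤ C)
    -- hypothesis: the Hardy–Littlewood inequality with constant `C` holds for all
    -- `(s+1)`-linear forms on `ℓ_{p_1}^n × ⋯ × ℓ_{p_s}^n × ℓ_∞^n`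
    (hyp : ∀ (q : Fin (s + 1) → ℝ≥0∞), (∀ i : Fin s, q i.castSucc = p i) →
      q (Fin.last s) = ⊤ →
      ∀ [∀ i, Fact (1 ≤ q i)], ∀ (n : ℕ), 0 < n →
      ∀ S : ContinuousMultilinearMap 𝕂
          (fun i : Fin (s + 1) => PiLp (q i) (fun _ : Fin n => 𝕂)) 𝕂,
        (∑ j : Fin (s + 1) → Fin n,
            ‖S (fun i => unitVec 𝕂 (q i) (j i))‖ ^
              ((1 : ℝ) / (1 - ∑ i, (1 / p i).toReal))) ^
            (1 - ∑ i, (1 / p i).toReal)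
          ≤ C * ‖S‖) :
    -- conclusion: it also holds, with the appropriately improved exponent, for all
    -- `(s+1)`-linear forms on `ℓ_{p_1}^n × ⋯ × ℓ_{p_s}^n × ℓ_{p_{s+1}}^n`
    ∀ (pl : ℝ≥0∞), 1 < pl → (∑ i, (1 / p i).toReal) + (1 / pl).toReal < 1 →
    ∀ (q : Fin (s + 1) → ℝ≥0∞), (∀ i : Fin s, q i.castSucc = p i) →
      q (Fin.last s) = pl →
      ∀ [∀ i, Fact (1 ≤ q i)], ∀ (n : ℕ), 0 < n →
      ∀ T : ContinuousMultilinearMap 𝕂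
          (fun i : Fin (s + 1) => PiLp (q i) (fun _ : Fin n => 𝕂)) 𝕂,
        (∑ j : Fin (s + 1) → Fin n,
            ‖T (fun i => unitVec 𝕂 (q i) (j i))‖ ^
              ((1 : ℝ) / (1 - (∑ i, (1 / p i).toReal) - (1 / pl).toReal))) ^
            (1 - (∑ i, (1 / p i).toReal) - (1 / pl).toReal)
          ≤ C * ‖T‖ := by
  intro pl hpl1 hl q hqc hql _inst n hn T
  by_cases hpt : pl = ⊤
  · subst hpt
    have h0 : ((1 : ℝ≥0∞) / ⊤).toReal = 0 := by simp
    rw [h0, sub_zero]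
    exact hyp q hqc hql n hn T
  · -- main case : pl ≠ ⊤
    have hpl0 : pl ≠ 0 := by
      intro h; rw [h] at hpl1; exact absurd hpl1 (by simp)
    have hPpos : 0 < pl.toReal := ENNReal.toReal_pos hpl0 hpt
    have hPinv : ((1 : ℝ≥0∞) / pl).toReal = (pl.toReal)⁻¹ := by
      rw [one_div, ENNReal.toReal_inv]
    rw [hPinv]
    rw [hPinv] at hl
    set lam := ∑ i, (1 / p i).toReal with hlam
    have hlam0 : 0 ≤ lam := Finset.sum_nonneg fun i _ => ENNReal.toReal_nonneg
    have hPinv0 : 0 ≤ (pl.toReal)⁻¹ := inv_nonneg.2 hPpos.le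
    have h1lp : 0 < 1 - lam - (pl.toReal)⁻¹ := by linarith
    have h1l : 0 < 1 - lam := by linarith
    -- q' replaces the last exponent by ∞
    set q' : Fin (s + 1) → ℝ≥0∞ := Function.update q (Fin.last s) ⊤ with hq'
    have hq'l : q' (Fin.last s) = ⊤ := Function.update_self _ _ _
    have hq'c : ∀ i : Fin s, q' i.castSucc = p i := fun i => by
      rw [hq', Function.update_of_ne (Fin.castSucc_lt_last i).ne _ _]
      exact hqc i
    haveI instq' : ∀ i, Fact (1 ≤ q' i) := by
      intro i
      by_cases hi : i = Fin.last s
      · subst hi; rw [hq'l]; exact ⟨le_top⟩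
      · rw [hq', Function.update_of_ne hi _ _]; infer_instance
    -- regrouping of sums
    have hgroup : ∀ F : (Fin (s + 1) → Fin n) → ℝ,
        ∑ j, F j = ∑ k : Fin n, ∑ j' : Fin s → Fin n, F (Fin.snoc (α := fun _ => Fin n) j' k) := by
      intro F
      rw [← Equiv.sum_comp (Fin.snocEquiv (fun _ => Fin n)) F, Fintype.sum_prod_type]
      rfl
    set t' : (Fin s → Fin n) → Fin n → ℝ :=
      fun j' k => ‖T (fun i => unitVec 𝕂 (q i) (Fin.snoc (α := fun _ => Fin n) j' k i))‖ with ht'def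
    have hM : 0 ≤ C * ‖T‖ := mul_nonneg (by linarith) (norm_nonneg _)
    have hkey : ∀ a : Fin n → ℝ, (∀ k, 0 ≤ a k) → ∑ k, a k ^ pl.toReal ≤ 1 →
        (∑ k, ∑ j', (a k * t' j' k) ^ (1 / (1 - lam))) ^ (1 / (1 / (1 - lam)))
          ≤ C * ‖T‖ := by
      intro a ha haP
      rw [one_div_one_div]
      -- build the family of continuous linear maps
      have hex : ∀ i : Fin (s + 1),
          ∃ f : PiLp (q' i) (fun _ : Fin n => 𝕂) →L[𝕂] PiLp (q i) (fun _ : Fin n => 𝕂),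
            ‖f‖ ≤ 1 ∧ ∀ j : Fin n, f (unitVec 𝕂 (q' i) j) =
              (if i = Fin.last s then ((a j : ℝ) : 𝕂) else 1) • unitVec 𝕂 (q i) j := by
        intro i
        by_cases hi : i = Fin.last s
        · subst hi
          obtain ⟨f, hf1, hf2⟩ := diagPiLp 𝕂 (q' (Fin.last s)) (q (Fin.last s)) hq'l
            (by rw [hql]; exact hpl1) (by rw [hql]; exact hpt) a ha
            (by rw [hql]; exact haP)
          exact ⟨f, hf1, fun j => by rw [hf2 j, if_pos rfl]⟩
        · obtain ⟨f, hf1, hf2⟩ := idPiLp 𝕂 (q' i) (q i)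
            (by rw [hq']; exact Function.update_of_ne hi _ _)
          exact ⟨f, hf1, fun j => by rw [hf2 j, if_neg hi, one_smul]⟩
      choose d hd1 hd2 using hex
      set S := T.compContinuousLinearMap d with hS
      have hSnorm : ‖S‖ ≤ ‖T‖ := by
        refine (T.norm_compContinuousLinearMap_le d).trans ?_
        calc ‖T‖ * ∏ i, ‖d i‖ ≤ ‖T‖ * 1 :=
            mul_le_mul_of_nonneg_left
              (Finset.prod_le_one (fun i _ => norm_nonneg _) (fun i _ => hd1 i))
              (norm_nonneg T)
          _ = ‖T‖ := mul_one _
      have hcoef : ∀ jj : Fin (s + 1) → Fin n,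
          ‖S (fun i => unitVec 𝕂 (q' i) (jj i))‖ =
            a (jj (Fin.last s)) * ‖T (fun i => unitVec 𝕂 (q i) (jj i))‖ := by
        intro jj
        have h1 : S (fun i => unitVec 𝕂 (q' i) (jj i)) =
            (∏ i, (if i = Fin.last s then ((a (jj i) : ℝ) : 𝕂) else 1)) •
              T (fun i => unitVec 𝕂 (q i) (jj i)) := by
          rw [hS, ContinuousMultilinearMap.compContinuousLinearMap_apply]
          rw [show (fun i => d i (unitVec 𝕂 (q' i) (jj i))) =
            fun i => (if i = Fin.last s then ((a (jj i) : ℝ) : 𝕂) else 1) •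
              unitVec 𝕂 (q i) (jj i) from funext fun i => hd2 i (jj i)]
          exact T.map_smul_univ _ _
        rw [h1, norm_smul]
        congr 1
        rw [Finset.prod_ite_eq' Finset.univ (Fin.last s)
          (fun i => ((a (jj i) : ℝ) : 𝕂)), if_pos (Finset.mem_univ _)]
        rw [RCLike.norm_ofReal, abs_of_nonneg (ha _)]
      have hswap : ∑ k, ∑ j', (a k * t' j' k) ^ (1 / (1 - lam)) =
          ∑ jj : Fin (s + 1) → Fin n,
            ‖S (fun i => unitVec 𝕂 (q' i) (jj i))‖ ^ (1 / (1 - lam)) := by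
        rw [hgroup (fun jj => ‖S (fun i => unitVec 𝕂 (q' i) (jj i))‖ ^ (1 / (1 - lam)))]
        refine Finset.sum_congr rfl fun k _ => Finset.sum_congr rfl fun j' _ => ?_
        rw [hcoef, Fin.snoc_last]
      rw [hswap]
      calc (∑ jj : Fin (s + 1) → Fin n,
            ‖S (fun i => unitVec 𝕂 (q' i) (jj i))‖ ^ (1 / (1 - lam))) ^ (1 - lam)
          ≤ C * ‖S‖ := hyp q' hq'c hq'l n hn S
        _ ≤ C * ‖T‖ := mul_le_mul_of_nonneg_left hSnorm (by linarith)
    have hfinal := extrapolate' (μ := 1 / (1 - lam)) (ρ := 1 / (1 - lam - (pl.toReal)⁻¹))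
      (P := pl.toReal) (M := C * ‖T‖)
      (by positivity) (one_div_le_one_div_of_le h1lp (by linarith)) hPpos
      (by rw [one_div_one_div, one_div_one_div, one_div]; ring)
      t' (fun j' k => norm_nonneg _) hM hkey
    rw [one_div_one_div] at hfinal
    rw [hgroup (fun jj => ‖T (fun i => unitVec 𝕂 (q i) (jj i))‖ ^
      ((1 : ℝ) / (1 - lam - (pl.toReal)⁻¹)))]
    exact hfinal
end

section
/- Let m be a positive integer, r ≥ 1, and s = (s_1,…,s_m), p = (p_1,…,p_m), q = (q_1,…,q_m) ∈ [1,∞)^m be such that 1/r − (1/p_1 + ⋯ + 1/p_m) + (1/q_1 + ⋯ + 1/q_m) > 0 and, for each k = 1,…,m, q_k ≥ p_k and 1/s_k − (1/q_k + ⋯ + 1/q_m) = 1/r − (1/p_k + ⋯ + 1/p_m). Let E_1,…,E_m, F be Banach spaces, let T : E_1 × ⋯ × E_m → F be a continuous m-linear operator, and let C > 0 be such that for every positive integer N and all finite families (x_j^{(k)})_{j=1}^N in E_k (k = 1,…,m), (∑_{j_1,…,j_m=1}^N ‖T(x_{j_1}^{(1)},…,x_{j_m}^{(m)})‖^r)^{1/r}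 ≤ C ∏_{k=1}^m ‖(x_j^{(k)})_{j=1}^N‖_{w,p_k}. Then for every positive integer N and all finite families (x_j^{(k)})_{j=1}^N in E_k, the iterated mixed norm satisfies (∑_{j_1=1}^N (⋯ (∑_{j_m=1}^N ‖T(x_{j_1}^{(1)},…,x_{j_m}^{(m)})‖^{s_m})^{s_{m−1}/s_m} ⋯ )^{s_1/s_2})^{1/s_1} ≤ C ∏_{k=1}^m ‖(x_j^{(k)})_{j=1}^N‖_{w,q_k}. -/
open Finset

/-- The weak `ℓ_t` norm of a finite family `x_1, …, x_N` in a normed space `E`: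
`sup { (∑_{j=1}^N |φ(x_j)|^t)^{1/t} : φ ∈ E*, ‖φ‖ ≤ 1 }`. -/
noncomputable def weakNorm (𝕂 : Type*) {E : Type*} [RCLike 𝕂] [NormedAddCommGroup E]
    [NormedSpace 𝕂 E] (t : ℝ) {N : ℕ} (x : Fin N → E) : ℝ :=
  ⨆ φ : { φ : E →L[𝕂] 𝕂 // ‖φ‖ ≤ 1 }, (∑ j, ‖(φ : E →L[𝕂] 𝕂) (x j)‖ ^ t) ^ (1 / t)

/-- The iterated mixed `ℓ_{s_1}(ℓ_{s_2}(⋯(ℓ_{s_m})))` norm of a scalar family indexed by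
`(Fin N)^m`:
`(∑_{j_1} ( ⋯ (∑_{j_m} f(j_1,…,j_m)^{s_m})^{s_{m-1}/s_m} ⋯ )^{s_1/s_2})^{1/s_1}`. -/
noncomputable def mixedNorm {N : ℕ} : (m : ℕ) → (Fin m → ℝ) → ((Fin m → Fin N) → ℝ) → ℝ
  | 0, _, f => f (fun i => i.elim0)
  | m + 1, s, f =>
      (∑ j : Fin N,
        mixedNorm m (fun i => s i.succ) (fun jr => f (Fin.cons j jr)) ^ s 0) ^ (1 / s 0)


lemma real_add_rpow_le {c : ℝ} (x z : ℝ) (hx : 0 ≤ x) (hz : 0 ≤ z) (hc : 1 ≤ c) :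
    x ^ c + z ^ c ≤ (x + z) ^ c := by
  have h := NNReal.coe_le_coe.2 (NNReal.add_rpow_le_rpow_add x.toNNReal z.toNNReal hc)
  push_cast at h
  rwa [Real.coe_toNNReal x hx, Real.coe_toNNReal z hz] at h

lemma sum_rpow_le_rpow_sum'_s13 {ι : Type*} (s : Finset ι) (y : ι → ℝ) (hy : ∀ i ∈ s, 0 ≤ y i)
    {c : ℝ} (hc : 1 ≤ c) : ∑ i ∈ s, y i ^ c ≤ (∑ i ∈ s, y i) ^ c := by
  classical
  induction s using Finset.induction with
  | empty => simp [Real.zero_rpow (zero_lt_one.trans_le hc).ne']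
  | @insert a s ha ih =>
      rw [Finset.sum_insert ha, Finset.sum_insert ha]
      have h1 : ∑ i ∈ s, y i ^ c ≤ (∑ i ∈ s, y i) ^ c :=
        ih (fun i hi => hy i (Finset.mem_insert_of_mem hi))
      refine le_trans (add_le_add_right h1 _) ?_
      exact real_add_rpow_le _ _ (hy a (Finset.mem_insert_self a s))
        (Finset.sum_nonneg fun i hi => hy i (Finset.mem_insert_of_mem hi)) hc

lemma rpow_sum_mono {ι : Type*} [Fintype ι] (f : ι → ℝ) (hf : ∀ i, 0 ≤ f i) {a b : ℝ}
    (ha : 0 < a) (hab : a ≤ b) :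
    (∑ i, f i ^ b) ^ (1 / b) ≤ (∑ i, f i ^ a) ^ (1 / a) := by
  have hb : 0 < b := ha.trans_le hab
  have h1 : ∀ i : ι, f i ^ b = (f i ^ a) ^ (b / a) := fun i => by
    rw [← Real.rpow_mul (hf i), mul_div_cancel₀ _ ha.ne']
  have h2 : ∑ i, f i ^ b ≤ (∑ i, f i ^ a) ^ (b / a) := by
    simp_rw [h1]
    exact sum_rpow_le_rpow_sum'_s13 _ _ (fun i _ => Real.rpow_nonneg (hf i) a)
      ((one_le_div ha).2 hab)
  calc (∑ i, f i ^ b) ^ (1 / b) ≤ ((∑ i, f i ^ a) ^ (b / a)) ^ (1 / b) := by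
        apply Real.rpow_le_rpow (Finset.sum_nonneg fun i _ => Real.rpow_nonneg (hf i) b) h2
        positivity
    _ = (∑ i, f i ^ a) ^ (1 / a) := by
        rw [← Real.rpow_mul (Finset.sum_nonneg fun i _ => Real.rpow_nonneg (hf i) a)]
        congr 1
        field_simp

lemma Lp_sum_le {ι κ : Type*} [Fintype κ] (s : Finset ι) (u : ι → κ → ℝ)
    (hu : ∀ i k, 0 ≤ u i k) {c : ℝ} (hc : 1 ≤ c) :
    (∑ k, (∑ i ∈ s, u i k) ^ c) ^ (1 / c) ≤ ∑ i ∈ s, (∑ k, u i k ^ c) ^ (1 / c) := by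
  classical
  have hc0 : c ≠ 0 := (zero_lt_one.trans_le hc).ne'
  induction s using Finset.induction with
  | empty => simp [Real.zero_rpow hc0, Real.zero_rpow (inv_ne_zero hc0)]
  | @insert a s ha ih =>
      rw [Finset.sum_insert ha]
      have hs : ∀ k, 0 ≤ ∑ i ∈ s, u i k := fun k => Finset.sum_nonneg fun i _ => hu i k
      have key := Real.Lp_add_le Finset.univ (fun k => u a k) (fun k => ∑ i ∈ s, u i k) hc
      have A : ∑ k, |u a k + ∑ i ∈ s, u i k| ^ c = ∑ k, (u a k + ∑ i ∈ s, u i k) ^ c :=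
        Finset.sum_congr rfl fun k _ => by rw [abs_of_nonneg (add_nonneg (hu a k) (hs k))]
      have B : ∑ k, |u a k| ^ c = ∑ k, u a k ^ c :=
        Finset.sum_congr rfl fun k _ => by rw [abs_of_nonneg (hu a k)]
      have Cc : ∑ k, |∑ i ∈ s, u i k| ^ c = ∑ k, (∑ i ∈ s, u i k) ^ c :=
        Finset.sum_congr rfl fun k _ => by rw [abs_of_nonneg (hs k)]
      rw [A, B, Cc] at key
      refine le_trans ?_ (le_trans key ?_)
      · apply le_of_eq
        congr 1
        exact Finset.sum_congr rfl fun k _ => by rw [Finset.sum_insert ha]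
      · exact add_le_add_right ih _

lemma rpow_swap {ι κ : Type*} [Fintype ι] [Fintype κ] (f : ι → κ → ℝ)
    (hf : ∀ i k, 0 ≤ f i k) {a b : ℝ} (ha : 0 < a) (hab : a ≤ b) :
    (∑ k, (∑ i, f i k ^ a) ^ (b / a)) ^ (1 / b) ≤ (∑ i, (∑ k, f i k ^ b) ^ (a / b)) ^ (1 / a) := by
  have hb : 0 < b := ha.trans_le hab
  have h := Lp_sum_le Finset.univ (fun i k => f i k ^ a) (fun i k => Real.rpow_nonneg (hf i k) a)
    ((one_le_div ha).2 hab)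
  have e1 : ∀ i k, (f i k ^ a) ^ (b / a) = f i k ^ b := fun i k => by
    rw [← Real.rpow_mul (hf i k), mul_div_cancel₀ _ ha.ne']
  have e2 : (1 : ℝ) / (b / a) = a / b := by rw [one_div_div]
  simp only [e1, e2] at h
  -- h : (∑ k, (∑ i, f i k ^ a) ^ (b/a)) ^ (a/b) ≤ ∑ i, (∑ k, f i k ^ b) ^ (a/b)
  have hL0 : 0 ≤ ∑ k, (∑ i, f i k ^ a) ^ (b / a) :=
    Finset.sum_nonneg fun k _ => Real.rpow_nonneg
      (Finset.sum_nonneg fun i _ => Real.rpow_nonneg (hf i k) a) _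
  calc (∑ k, (∑ i, f i k ^ a) ^ (b / a)) ^ (1 / b)
      = ((∑ k, (∑ i, f i k ^ a) ^ (b / a)) ^ (a / b)) ^ (1 / a) := by
        rw [← Real.rpow_mul hL0]; congr 1; field_simp
    _ ≤ (∑ i, (∑ k, f i k ^ b) ^ (a / b)) ^ (1 / a) := by
        apply Real.rpow_le_rpow (Real.rpow_nonneg hL0 _) h
        positivity

variable {N : ℕ}

lemma mixedNorm_nonneg : ∀ (m : ℕ) (s : Fin m → ℝ) (f : (Fin m → Fin N) → ℝ),
    (∀ j, 0 ≤ f j) → 0 ≤ mixedNorm m s f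
  | 0, s, f, hf => hf _
  | m+1, s, f, hf => by
      rw [mixedNorm]
      exact Real.rpow_nonneg (Finset.sum_nonneg fun j _ => Real.rpow_nonneg
        (mixedNorm_nonneg m _ _ fun jr => hf _) _) _

lemma mixedNorm_mono : ∀ (m : ℕ) (s : Fin m → ℝ) (f g : (Fin m → Fin N) → ℝ),
    (∀ i, 0 ≤ s i) → (∀ j, 0 ≤ f j) → (∀ j, f j ≤ g j) → mixedNorm m s f ≤ mixedNorm m s g
  | 0, s, f, g, _, _, hfg => hfg _
  | m+1, s, f, g, hs, hf, hfg => by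
      rw [mixedNorm, mixedNorm]
      apply Real.rpow_le_rpow
      · exact Finset.sum_nonneg fun j _ => Real.rpow_nonneg
          (mixedNorm_nonneg m _ _ fun jr => hf _) _
      · apply Finset.sum_le_sum
        intro j _
        apply Real.rpow_le_rpow (mixedNorm_nonneg m _ _ fun jr => hf _)
          (mixedNorm_mono m _ _ _ (fun i => hs i.succ) (fun jr => hf _) (fun jr => hfg _)) (hs 0)
      · exact one_div_nonneg.2 (hs 0)

lemma mixedNorm_smul : ∀ (m : ℕ) (s : Fin m → ℝ) (f : (Fin m → Fin N) → ℝ) (c : ℝ),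
    (∀ i, 0 < s i) → (∀ j, 0 ≤ f j) → 0 ≤ c →
    mixedNorm m s (fun j => c * f j) = c * mixedNorm m s f
  | 0, s, f, c, _, _, _ => rfl
  | m+1, s, f, c, hs, hf, hc => by
      rw [mixedNorm, mixedNorm]
      have e : ∀ j : Fin N,
          mixedNorm m (fun i => s i.succ) (fun jr => c * f (Fin.cons j jr)) =
            c * mixedNorm m (fun i => s i.succ) (fun jr => f (Fin.cons j jr)) := fun j =>
        mixedNorm_smul m _ _ c (fun i => hs i.succ) (fun jr => hf _) hc
      simp only [e]
      have hM : ∀ j : Fin N, 0 ≤ mixedNorm m (fun i => s i.succ) (fun jr => f (Fin.cons j jr)) :=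
        fun j => mixedNorm_nonneg m _ _ fun jr => hf _
      have e2 : ∀ j : Fin N,
          (c * mixedNorm m (fun i => s i.succ) fun jr => f (Fin.cons j jr)) ^ s 0 =
            c ^ s 0 * (mixedNorm m (fun i => s i.succ) fun jr => f (Fin.cons j jr)) ^ s 0 :=
        fun j => Real.mul_rpow hc (hM j)
      simp only [e2, ← Finset.mul_sum]
      rw [Real.mul_rpow (Real.rpow_nonneg hc _)
        (Finset.sum_nonneg fun j _ => Real.rpow_nonneg (hM j) _),
        ← Real.rpow_mul hc, mul_one_div, div_self (hs 0).ne', Real.rpow_one]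

lemma mixedNorm_minkowski : ∀ (m : ℕ) (s : Fin m → ℝ) (g : (Fin m → Fin N) → Fin N → ℝ) (β : ℝ),
    (∀ i, 0 < s i) → (0 < β) → (∀ i, s i ≤ β) → (∀ j j0, 0 ≤ g j j0) →
    (∑ j0 : Fin N, mixedNorm m s (fun j => g j j0) ^ β) ^ (1/β) ≤
      mixedNorm m s (fun j => (∑ j0 : Fin N, g j j0 ^ β) ^ (1/β))
  | 0, s, g, β, _, _, _, _ => le_of_eq rfl
  | m+1, s, g, β, hs, hβ, hsβ, hg => by
      have hs0 := hs 0
      set M : Fin N → Fin N → ℝ := fun j1 j0 =>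
        mixedNorm m (fun i => s i.succ) (fun jr => g (Fin.cons j1 jr) j0) with hM
      have hMn : ∀ j1 j0, 0 ≤ M j1 j0 := fun j1 j0 => mixedNorm_nonneg m _ _ fun jr => hg _ _
      have e1 : ∀ j0 : Fin N, mixedNorm (m+1) s (fun j => g j j0) ^ β =
          (∑ j1 : Fin N, M j1 j0 ^ s 0) ^ (β / s 0) := by
        intro j0
        rw [mixedNorm, ← Real.rpow_mul
          (Finset.sum_nonneg fun j1 _ => Real.rpow_nonneg (hMn j1 j0) _), one_div,
          inv_mul_eq_div]
      rw [mixedNorm]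
      simp only [e1]
      refine le_trans (rpow_swap M hMn hs0 (hsβ 0)) ?_
      apply Real.rpow_le_rpow
      · exact Finset.sum_nonneg fun j1 _ => Real.rpow_nonneg
          (Finset.sum_nonneg fun j0 _ => Real.rpow_nonneg (hMn j1 j0) _) _
      · apply Finset.sum_le_sum
        intro j1 _
        have ih := mixedNorm_minkowski m (fun i => s i.succ) (fun jr j0 => g (Fin.cons j1 jr) j0) β
          (fun i => hs i.succ) hβ (fun i => hsβ i.succ) (fun jr j0 => hg _ _)
        have h0 : 0 ≤ ∑ j0 : Fin N, M j1 j0 ^ β :=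
          Finset.sum_nonneg fun j0 _ => Real.rpow_nonneg (hMn j1 j0) _
        calc (∑ j0 : Fin N, M j1 j0 ^ β) ^ (s 0 / β)
            = ((∑ j0 : Fin N, M j1 j0 ^ β) ^ (1 / β)) ^ s 0 := by
              rw [← Real.rpow_mul h0, one_div, inv_mul_eq_div]
          _ ≤ (mixedNorm m (fun i => s i.succ)
                (fun jr => (∑ j0 : Fin N, g (Fin.cons j1 jr) j0 ^ β) ^ (1/β))) ^ s 0 := by
              exact Real.rpow_le_rpow (Real.rpow_nonneg h0 _) ih hs0.le
      · exact one_div_nonneg.2 hs0.le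

section W
variable {𝕂 E : Type*} [RCLike 𝕂] [NormedAddCommGroup E] [NormedSpace 𝕂 E] {N : ℕ}

lemma weakNorm_nonneg (t : ℝ) (x : Fin N → E) : 0 ≤ weakNorm 𝕂 t x :=
  Real.iSup_nonneg fun _ => Real.rpow_nonneg
    (sum_nonneg fun j _ => Real.rpow_nonneg (norm_nonneg _) _) _

lemma weakNorm_bddAbove (t : ℝ) (ht : 0 < t) (x : Fin N → E) :
    BddAbove (Set.range fun φ : { φ : E →L[𝕂] 𝕂 // ‖φ‖ ≤ 1 } =>
      (∑ j, ‖(φ : E →L[𝕂] 𝕂) (x j)‖ ^ t) ^ (1 / t)) := by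
  refine ⟨(∑ j, ‖x j‖ ^ t) ^ (1 / t), ?_⟩
  rintro y ⟨φ, rfl⟩
  apply Real.rpow_le_rpow (sum_nonneg fun j _ => Real.rpow_nonneg (norm_nonneg _) _)
  · apply sum_le_sum
    intro j _
    apply Real.rpow_le_rpow (norm_nonneg _) ?_ ht.le
    calc ‖(φ : E →L[𝕂] 𝕂) (x j)‖ ≤ ‖(φ : E →L[𝕂] 𝕂)‖ * ‖x j‖ := ContinuousLinearMap.le_opNorm _ _
      _ ≤ 1 * ‖x j‖ := by apply mul_le_mul_of_nonneg_right φ.2 (norm_nonneg _)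
      _ = ‖x j‖ := one_mul _
  · exact one_div_nonneg.2 ht.le

lemma le_weakNorm (t : ℝ) (ht : 0 < t) (x : Fin N → E) (φ : E →L[𝕂] 𝕂) (hφ : ‖φ‖ ≤ 1) :
    (∑ j, ‖φ (x j)‖ ^ t) ^ (1 / t) ≤ weakNorm 𝕂 t x :=
  le_ciSup (weakNorm_bddAbove t ht x) (⟨φ, hφ⟩ : { φ : E →L[𝕂] 𝕂 // ‖φ‖ ≤ 1 })

lemma weakNorm_le (t : ℝ) (x : Fin N → E) (B : ℝ)
    (h : ∀ φ : E →L[𝕂] 𝕂, ‖φ‖ ≤ 1 → (∑ j, ‖φ (x j)‖ ^ t) ^ (1 / t) ≤ B) :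
    weakNorm 𝕂 t x ≤ B := by
  have : Nonempty { φ : E →L[𝕂] 𝕂 // ‖φ‖ ≤ 1 } := ⟨⟨0, by simp⟩⟩
  exact ciSup_le fun φ => h φ φ.2

lemma weakNorm_smul_le (p q t : ℝ) (hp : 1 ≤ p) (hpq : p < q) (ht : 1 / t = 1 / p - 1 / q)
    (x : Fin N → E) (a : Fin N → ℝ) (ha : ∀ j, 0 ≤ a j) (hat : ∑ j, a j ^ t ≤ 1) :
    weakNorm 𝕂 p (fun j => ((a j : 𝕂) • x j)) ≤ weakNorm 𝕂 q x := by
  have hp0 : 0 < p := zero_lt_one.trans_le hp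
  have hq0 : 0 < q := hp0.trans hpq
  have ht0 : 0 < 1 / t := by
    rw [ht]; exact sub_pos.2 (one_div_lt_one_div_of_lt hp0 hpq)
  have htpos : 0 < t := one_div_pos.1 ht0
  have hpt : p < t := by
    have h1 : 1 / t < 1 / p := by
      rw [ht]
      have h2 : 0 < 1/q := by positivity
      linarith
    exact lt_of_one_div_lt_one_div htpos h1
  apply weakNorm_le
  intro φ hφ
  have hu : ∀ j, (0:ℝ) ≤ ‖φ (x j)‖ := fun j => norm_nonneg _
  have e1 : ∀ j : Fin N, ‖φ ((a j : 𝕂) • x j)‖ ^ p = a j ^ p * ‖φ (x j)‖ ^ p := by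
    intro j
    rw [map_smul, norm_smul, RCLike.norm_ofReal, abs_of_nonneg (ha j),
      Real.mul_rpow (ha j) (norm_nonneg _)]
  have hconj : Real.HolderConjugate (t / p) (q / p) := by
    rw [Real.holderConjugate_iff]
    constructor
    · exact (one_lt_div hp0).2 hpt
    · have hptq : 1 / t + 1 / q = 1 / p := by rw [ht]; ring
      rw [inv_div, inv_div]
      calc p / t + p / q = p * (1 / t + 1 / q) := by ring
        _ = p * (1 / p) := by rw [hptq]
        _ = 1 := by field_simp
  have hold := Real.inner_le_Lp_mul_Lq_of_nonneg univ hconj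
    (f := fun j => a j ^ p) (g := fun j => ‖φ (x j)‖ ^ p)
    (fun j _ => Real.rpow_nonneg (ha j) _) (fun j _ => Real.rpow_nonneg (hu j) _)
  have e2 : ∀ j : Fin N, (a j ^ p) ^ (t / p) = a j ^ t := fun j => by
    rw [← Real.rpow_mul (ha j), mul_div_cancel₀ _ hp0.ne']
  have e3 : ∀ j : Fin N, (‖φ (x j)‖ ^ p) ^ (q / p) = ‖φ (x j)‖ ^ q := fun j => by
    rw [← Real.rpow_mul (hu j), mul_div_cancel₀ _ hp0.ne']
  simp only [e2, e3, one_div_div] at hold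
  have hS : (0:ℝ) ≤ ∑ j, ‖φ (x j)‖ ^ q := sum_nonneg fun j _ => Real.rpow_nonneg (hu j) _
  have hat' : (∑ j, a j ^ t) ^ (p / t) ≤ 1 := by
    apply Real.rpow_le_one (sum_nonneg fun j _ => Real.rpow_nonneg (ha j) _) hat
    positivity
  have key : ∑ j, ‖φ ((a j : 𝕂) • x j)‖ ^ p ≤ (∑ j, ‖φ (x j)‖ ^ q) ^ (p / q) := by
    simp only [e1]
    refine le_trans hold ?_
    calc (∑ j, a j ^ t) ^ (p / t) * (∑ j, ‖φ (x j)‖ ^ q) ^ (p / q)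
        ≤ 1 * (∑ j, ‖φ (x j)‖ ^ q) ^ (p / q) :=
          mul_le_mul_of_nonneg_right hat' (Real.rpow_nonneg hS _)
      _ = (∑ j, ‖φ (x j)‖ ^ q) ^ (p / q) := one_mul _
  calc (∑ j, ‖φ ((a j : 𝕂) • x j)‖ ^ p) ^ (1 / p)
      ≤ ((∑ j, ‖φ (x j)‖ ^ q) ^ (p / q)) ^ (1 / p) := by
        apply Real.rpow_le_rpow (sum_nonneg fun j _ => Real.rpow_nonneg (norm_nonneg _) _) key
        positivity
    _ = (∑ j, ‖φ (x j)‖ ^ q) ^ (1 / q) := by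
        rw [← Real.rpow_mul hS]
        congr 1
        field_simp
    _ ≤ weakNorm 𝕂 q x := le_weakNorm q hq0 x φ hφ
end W

lemma sum_extend {n N : ℕ} (h : n ≤ N) (g : Fin N → ℝ)
    (hg : ∀ j : Fin N, n ≤ (j : ℕ) → g j = 0) :
    ∑ j, g j = ∑ j : Fin n, g (Fin.castLE h j) := by
  classical
  set f : ℕ → ℝ := fun i => if hi : i < N then g ⟨i, hi⟩ else 0 with hf
  have e1 : ∑ j, g j = ∑ i ∈ Finset.range N, f i := by
    rw [← Fin.sum_univ_eq_sum_range]
    apply Finset.sum_congr rfl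
    intro j _
    simp only [hf, j.isLt, dif_pos, Fin.eta]
  have e2 : ∑ i ∈ Finset.range n, f i + ∑ i ∈ Finset.Ico n N, f i = ∑ i ∈ Finset.range N, f i := by
    rw [Finset.range_eq_Ico, Finset.range_eq_Ico]
    exact Finset.sum_Ico_consecutive f (Nat.zero_le n) h
  have e3 : ∑ i ∈ Finset.Ico n N, f i = 0 := by
    apply Finset.sum_eq_zero
    intro i hi
    rcases Finset.mem_Ico.1 hi with ⟨h1, h2⟩
    simp only [hf, h2, dif_pos]
    exact hg ⟨i, h2⟩ h1
  have e4 : ∑ i ∈ Finset.range n, f i = ∑ j : Fin n, g (Fin.castLE h j) := by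
    rw [← Fin.sum_univ_eq_sum_range]
    apply Finset.sum_congr rfl
    intro j _
    simp only [hf, Nat.lt_of_lt_of_le j.isLt h, dif_pos]
    rfl
  rw [e1, ← e2, e3, add_zero, e4]

lemma sum_cons_split {α M : Type*} [Fintype α] [AddCommMonoid M] (m : ℕ)
    (g : (Fin (m+1) → α) → M) :
    ∑ j, g j = ∑ v : α, ∑ jr : Fin m → α, g (Fin.cons v jr) := by
  have e : ∑ x : α × (Fin m → α), g (Fin.cons x.1 x.2) = ∑ j, g j :=
    Fintype.sum_equiv (Fin.consEquiv (fun _ => α)) _ _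
      (fun x => congrArg g (by
        funext i
        rfl))
  rw [← e, Fintype.sum_prod_type]

lemma sum_extend_pi : ∀ (m : ℕ) {n N' : ℕ} (h : n ≤ N') (g : (Fin m → Fin N') → ℝ),
    (∀ j, (∃ k, n ≤ (j k : ℕ)) → g j = 0) →
    ∑ j, g j = ∑ j' : Fin m → Fin n, g (fun k => Fin.castLE h (j' k))
  | 0, n, N', h, g, hg => by
    rw [Fintype.sum_subsingleton _ (fun k : Fin 0 => k.elim0),
      Fintype.sum_subsingleton _ (fun k : Fin 0 => k.elim0)]
    exact congrArg g (funext fun k => k.elim0)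
  | m+1, n, N', h, g, hg => by
    rw [sum_cons_split m g, sum_cons_split m (fun j' => g fun k => Fin.castLE h (j' k))]
    have inner : ∀ v : Fin N', ∑ jr : Fin m → Fin N', g (Fin.cons v jr) =
        ∑ jr' : Fin m → Fin n, g (Fin.cons v (fun k => Fin.castLE h (jr' k))) := by
      intro v
      exact sum_extend_pi m h (fun jr => g (Fin.cons v jr))
        (fun jr ⟨k, hk⟩ => hg _ ⟨k.succ, by simpa using hk⟩)
    simp only [inner]
    rw [sum_extend h _ (fun v hv => Finset.sum_eq_zero fun jr' _ => hg _ ⟨0, by simpa using hv⟩)]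
    apply Finset.sum_congr rfl
    intro v _
    apply Finset.sum_congr rfl
    intro jr' _
    apply congrArg
    funext k
    refine Fin.cases ?_ ?_ k
    · simp
    · intro i
      simp

def padf {E : Type*} [Zero E] {n N : ℕ} (h : n ≤ N) (x : Fin n → E) : Fin N → E :=
  fun j => if hj : (j : ℕ) < n then x ⟨j, hj⟩ else 0

lemma padf_castLE {E : Type*} [Zero E] {n N : ℕ} (h : n ≤ N) (x : Fin n → E) (j : Fin n) :
    padf h x (Fin.castLE h j) = x j := by
  simp only [padf, Fin.coe_castLE, j.isLt, dif_pos, Fin.eta]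

lemma padf_ge {E : Type*} [Zero E] {n N : ℕ} (h : n ≤ N) (x : Fin n → E) (j : Fin N)
    (hj : n ≤ (j : ℕ)) : padf h x j = 0 := by
  simp only [padf, dif_neg (not_lt.2 hj)]

lemma weakNorm_pad {𝕂 E : Type*} [RCLike 𝕂] [NormedAddCommGroup E] [NormedSpace 𝕂 E]
    {n N : ℕ} (h : n ≤ N) (t : ℝ) (ht : 0 < t) (x : Fin n → E) :
    weakNorm 𝕂 t (padf h x) = weakNorm 𝕂 t x := by
  unfold weakNorm
  congr 1
  funext φ
  congr 1
  rw [sum_extend h (fun j => ‖(φ : E →L[𝕂] 𝕂) (padf h x j)‖ ^ t) (fun j hj => by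
    beta_reduce
    rw [padf_ge h x j hj]
    simp [Real.zero_rpow ht.ne'])]
  exact Finset.sum_congr rfl fun j _ => by rw [padf_castLE]

lemma hT_two {𝕂 : Type*} [RCLike 𝕂] {m : ℕ} {E : Fin (m+1) → Type*} {F : Type*}
    [∀ k, NormedAddCommGroup (E k)] [∀ k, NormedSpace 𝕂 (E k)]
    [NormedAddCommGroup F] [NormedSpace 𝕂 F]
    (T : ContinuousMultilinearMap 𝕂 E F) {r : ℝ} (hr : 1 ≤ r) {p : Fin (m+1) → ℝ}
    (hp : ∀ k, 1 ≤ p k) {C : ℝ}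
    (hT : ∀ (N : ℕ), 0 < N → ∀ x : ∀ k, Fin N → E k,
      (∑ j : Fin (m+1) → Fin N, ‖T (fun k => x k (j k))‖ ^ r) ^ (1 / r)
        ≤ C * ∏ k, weakNorm 𝕂 (p k) (x k))
    (N0 N1 : ℕ) (hN0 : 0 < N0) (x0 : Fin N0 → E 0) (y : ∀ k : Fin m, Fin N1 → E k.succ) :
    (∑ j0 : Fin N0, ∑ j' : Fin m → Fin N1,
        ‖T (Fin.cons (x0 j0) (fun k => y k (j' k)))‖ ^ r) ^ (1 / r)
      ≤ C * (weakNorm 𝕂 (p 0) x0 * ∏ k : Fin m, weakNorm 𝕂 (p k.succ) (y k)) := by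
  have hr0 : (0:ℝ) < r := zero_lt_one.trans_le hr
  set Nm := max N0 N1 with hNm
  have h0 : N0 ≤ Nm := le_max_left _ _
  have h1 : N1 ≤ Nm := le_max_right _ _
  have hNmpos : 0 < Nm := lt_of_lt_of_le hN0 h0
  set X : ∀ k : Fin (m+1), Fin Nm → E k :=
    Fin.cons (α := fun k => Fin Nm → E k) (padf h0 x0) (fun k => padf h1 (y k)) with hX
  have key := hT Nm hNmpos X
  -- rewrite the LHS sum of key
  have e1 : ∑ j : Fin (m+1) → Fin Nm, ‖T (fun k => X k (j k))‖ ^ r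
      = ∑ j0 : Fin N0, ∑ j' : Fin m → Fin N1,
          ‖T (Fin.cons (x0 j0) (fun k => y k (j' k)))‖ ^ r := by
    rw [sum_cons_split m (fun j => ‖T (fun k => X k (j k))‖ ^ r)]
    rw [sum_extend h0 _ (fun v hv => ?_)]
    · apply Finset.sum_congr rfl
      intro v _
      rw [sum_extend_pi m h1 _ (fun jr ⟨k, hk⟩ => ?_)]
      · apply Finset.sum_congr rfl
        intro jr _
        refine congrArg (fun z => ‖T z‖ ^ r) (funext fun k => ?_)
        refine Fin.cases ?_ (fun i => ?_) k
        · simp [hX, padf_castLE]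
        · simp [hX, padf_castLE]
      · -- some tail coordinate exceeds N1 : term is zero
        beta_reduce
        have hz : (fun k' => X k' ((Fin.cons (Fin.castLE h0 v) jr : Fin (m+1) → Fin Nm) k')) k.succ
            = 0 := by
          simp only [Fin.cons_succ, hX]
          exact padf_ge h1 (y k) (jr k) hk
        rw [T.map_coord_zero _ hz, norm_zero, Real.zero_rpow hr0.ne']
    · -- v exceeds N0 : inner sum is zero
      apply Finset.sum_eq_zero
      intro jr _
      have hz : (fun k => X k ((Fin.cons v jr : Fin (m+1) → Fin Nm) k)) 0 = 0 := by
        simp only [Fin.cons_zero, hX]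
        exact padf_ge h0 x0 v hv
      rw [T.map_coord_zero _ hz, norm_zero, Real.zero_rpow hr0.ne']
  have e2 : ∏ k, weakNorm 𝕂 (p k) (X k)
      = weakNorm 𝕂 (p 0) x0 * ∏ k : Fin m, weakNorm 𝕂 (p k.succ) (y k) := by
    rw [Fin.prod_univ_succ]
    congr 1
    · simp only [hX, Fin.cons_zero]
      exact weakNorm_pad h0 (p 0) (zero_lt_one.trans_le (hp 0)) x0
    · apply Finset.prod_congr rfl
      intro k _
      simp only [hX, Fin.cons_succ]
      exact weakNorm_pad h1 (p k.succ) (zero_lt_one.trans_le (hp k.succ)) (y k)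
  rw [e1, e2] at key
  exact key

universe u v

lemma exp_aux1 {t s ρ : ℝ} (ht : 0 < t) (hs : 0 < s) (hρ : 0 < ρ)
    (hrel : 1/t + 1/s = 1/ρ) : (s / t + 1) * ρ = s := by
  field_simp at hrel
  field_simp
  nlinarith [hrel]

lemma exp_aux2 {t s ρ : ℝ} (ht : 0 < t) (hs : 0 < s) (hρ : 0 < ρ)
    (hrel : 1/t + 1/s = 1/ρ) : (1 - ρ/t) * (1/ρ) = 1/s := by
  field_simp at hrel
  field_simp
  nlinarith [hrel]

theorem mainthm {𝕂 : Type*} [RCLike 𝕂] :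
    ∀ (m : ℕ) (E : Fin m → Type u) (F : Type v)
      [∀ k, NormedAddCommGroup (E k)] [∀ k, NormedSpace 𝕂 (E k)]
      [NormedAddCommGroup F] [NormedSpace 𝕂 F]
      (r : ℝ), 1 ≤ r → ∀ (s p q : Fin m → ℝ),
      (∀ k, 1 ≤ s k) → (∀ k, 1 ≤ p k) → (∀ k, 1 ≤ q k) → (∀ k, p k ≤ q k) →
      (∀ k : Fin m, 1 / s k - ∑ i ∈ Finset.univ.filter (fun i => k ≤ i), 1 / q i =
          1 / r - ∑ i ∈ Finset.univ.filter (fun i => k ≤ i), 1 / p i) →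
      ∀ (T : ContinuousMultilinearMap 𝕂 E F) (C : ℝ), 0 ≤ C →
      (∀ N : ℕ, 0 < N → ∀ x : ∀ k, Fin N → E k,
        (∑ j : Fin m → Fin N, ‖T (fun k => x k (j k))‖ ^ r) ^ (1 / r)
          ≤ C * ∏ k, weakNorm 𝕂 (p k) (x k)) →
      ∀ (N : ℕ), 0 < N → ∀ x : ∀ k, Fin N → E k,
        mixedNorm m s (fun j => ‖T (fun k => x k (j k))‖)
          ≤ C * ∏ k, weakNorm 𝕂 (q k) (x k) := by
  intro m
  induction m with
  | zero =>
    intro E F _ _ _ _ r hr s p q _ _ _ _ _ T C _ hT N hN x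
    have hr0 : (0:ℝ) < r := zero_lt_one.trans_le hr
    have h := hT N hN x
    rw [Fintype.sum_subsingleton _ (fun k : Fin 0 => (k.elim0 : Fin N))] at h
    rw [← Real.rpow_mul (norm_nonneg _), mul_one_div, div_self hr0.ne', Real.rpow_one] at h
    rw [mixedNorm]
    simpa using h
  | succ m IH =>
    intro E F iE1 iE2 iF1 iF2 r hr s p q hs hp hq hqp hks T C hC hT N hN x
    have hr0 : (0:ℝ) < r := zero_lt_one.trans_le hr
    have hppos : ∀ k, (0:ℝ) < p k := fun k => zero_lt_one.trans_le (hp k)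
    have hqpos : ∀ k, (0:ℝ) < q k := fun k => zero_lt_one.trans_le (hq k)
    have hspos : ∀ k, (0:ℝ) < s k := fun k => zero_lt_one.trans_le (hs k)
    have hδ : ∀ k : Fin (m+1), 0 ≤ 1 / p k - 1 / q k :=
      fun k => sub_nonneg.2 (one_div_le_one_div_of_le (hppos k) (hqp k))
    have filtersum : ∀ (g : Fin (m+1) → ℝ) (k : Fin m),
        (∑ i ∈ Finset.univ.filter (fun i => k.succ ≤ i), g i) =
          ∑ i ∈ Finset.univ.filter (fun i => k ≤ i), g i.succ := by
      intro g k
      rw [Finset.sum_filter, Finset.sum_filter, Fin.sum_univ_succ]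
      have h0 : ¬ (k.succ ≤ (0 : Fin (m+1))) := by
        simp [Fin.le_zero_iff]
      rw [if_neg h0, zero_add]
      apply Finset.sum_congr rfl
      intro i _
      congr 1
      simp [Fin.succ_le_succ_iff]
    have filter0 : ∀ (g : Fin (m+1) → ℝ),
        (∑ i ∈ Finset.univ.filter (fun i => (0:Fin (m+1)) ≤ i), g i) = ∑ i, g i := fun g => by
      rw [Finset.filter_true_of_mem (fun i _ => Fin.zero_le i)]
    have hksall : ∀ k : Fin (m+1), 1 / s k =
        1 / r - ∑ i ∈ Finset.univ.filter (fun i => k ≤ i), (1 / p i - 1 / q i) := by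
      intro k
      have hsub : ∑ i ∈ Finset.univ.filter (fun i => k ≤ i), (1 / p i - 1 / q i) =
          (∑ i ∈ Finset.univ.filter (fun i => k ≤ i), 1 / p i) -
            ∑ i ∈ Finset.univ.filter (fun i => k ≤ i), 1 / q i := Finset.sum_sub_distrib _ _
      linarith [hks k]
    set Rinv : ℝ := 1 / r - ∑ k : Fin m, (1 / p k.succ - 1 / q k.succ) with hRinvdef
    have hs0eq : 1 / s 0 = Rinv - (1 / p 0 - 1 / q 0) := by
      have h1 := hksall 0
      rw [filter0 (fun i => 1 / p i - 1 / q i), Fin.sum_univ_succ] at h1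
      rw [h1, hRinvdef]
      ring
    have hRinvpos : 0 < Rinv := by
      have h2 : 0 < 1 / s 0 := one_div_pos.2 (hspos 0)
      have h3 := hδ 0
      have h4 : Rinv = 1 / s 0 + (1 / p 0 - 1 / q 0) := by rw [hs0eq]; ring
      rw [h4]
      linarith
    set ρ : ℝ := Rinv⁻¹ with hρdef
    have hρinv : 1 / ρ = Rinv := by rw [one_div, hρdef, inv_inv]
    have hρ0 : 0 < ρ := inv_pos.2 hRinvpos
    have hrρ : r ≤ ρ := by
      apply le_of_one_div_le_one_div hρ0
      rw [hρinv, hRinvdef]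
      have : 0 ≤ ∑ k : Fin m, (1 / p k.succ - 1 / q k.succ) :=
        Finset.sum_nonneg fun k _ => hδ k.succ
      linarith
    have hρ1 : (1:ℝ) ≤ ρ := le_trans hr hrρ
    have hρs : ∀ k : Fin m, s k.succ ≤ ρ := by
      intro k
      apply le_of_one_div_le_one_div hρ0
      rw [hρinv, hRinvdef, hksall k.succ, filtersum (fun i => 1 / p i - 1 / q i) k]
      have := Finset.sum_le_sum_of_subset_of_nonneg
        (Finset.filter_subset (fun i => k ≤ i) Finset.univ) (fun i _ _ => hδ i.succ)
      linarith
    have hks' : ∀ k : Fin m,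
        1 / s k.succ - ∑ i ∈ Finset.univ.filter (fun i => k ≤ i), 1 / q i.succ =
          1 / r - ∑ i ∈ Finset.univ.filter (fun i => k ≤ i), 1 / p i.succ := by
      intro k
      have h1 := hks k.succ
      rwa [filtersum (fun i => 1 / q i) k, filtersum (fun i => 1 / p i) k] at h1
    haveI : Fact (1 ≤ ENNReal.ofReal ρ) := ⟨ENNReal.one_le_ofReal.2 hρ1⟩
    -- the key estimate after processing the tail coordinates
    have key3 : ∀ x0 : Fin N → E 0,
        (∑ j0 : Fin N, (mixedNorm m (fun i => s i.succ)
            (fun j' => ‖T (Fin.cons (x0 j0) (fun k => x k.succ (j' k)))‖)) ^ ρ) ^ (1/ρ)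
          ≤ C * weakNorm 𝕂 (p 0) x0 * ∏ k : Fin m, weakNorm 𝕂 (q k.succ) (x k.succ) := by
      intro x0
      let L : (∀ _ : Fin N, F) →L[𝕂] (PiLp (ENNReal.ofReal ρ) (fun _ : Fin N => F)) :=
        (PiLp.continuousLinearEquiv (ENNReal.ofReal ρ) 𝕂
          (fun _ : Fin N => F)).symm.toContinuousLinearMap
      let S : ContinuousMultilinearMap 𝕂 (fun k : Fin m => E k.succ)
          (PiLp (ENNReal.ofReal ρ) (fun _ : Fin N => F)) :=
        L.compContinuousMultilinearMap
          (ContinuousMultilinearMap.pi (fun j0 : Fin N => T.curryLeft (x0 j0)))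
      have htoReal : (ENNReal.ofReal ρ).toReal = ρ := ENNReal.toReal_ofReal hρ0.le
      have hSnorm : ∀ y : ∀ k : Fin m, E k.succ,
          ‖S y‖ = (∑ j0 : Fin N, ‖T (Fin.cons (x0 j0) y)‖ ^ ρ) ^ (1/ρ) := by
        intro y
        rw [PiLp.norm_eq_sum (by rw [htoReal]; exact hρ0) (S y), htoReal]
        exact congrArg (· ^ (1/ρ)) (Finset.sum_congr rfl fun j0 _ => by
          rw [show S y j0 = T (Fin.cons (x0 j0) y) from rfl])
      have hTS : ∀ N' : ℕ, 0 < N' → ∀ y : ∀ k : Fin m, Fin N' → E k.succ,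
          (∑ j' : Fin m → Fin N', ‖S (fun k => y k (j' k))‖ ^ r) ^ (1/r)
            ≤ (C * weakNorm 𝕂 (p 0) x0) *
                ∏ k : Fin m, weakNorm 𝕂 (p k.succ) (y k) := by
        intro N' hN' y
        have step1 : ∀ j' : Fin m → Fin N', ‖S (fun k => y k (j' k))‖ ^ r ≤
            ∑ j0 : Fin N, ‖T (Fin.cons (x0 j0) (fun k => y k (j' k)))‖ ^ r := by
          intro j'
          rw [hSnorm]
          have hnn : (0:ℝ) ≤ ∑ j0 : Fin N,
              ‖T (Fin.cons (x0 j0) (fun k => y k (j' k)))‖ ^ r :=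
            Finset.sum_nonneg fun j0 _ => Real.rpow_nonneg (norm_nonneg _) _
          have mono := rpow_sum_mono
            (fun j0 => ‖T (Fin.cons (x0 j0) (fun k => y k (j' k)))‖)
            (fun _ => norm_nonneg _) hr0 hrρ
          calc ((∑ j0 : Fin N, ‖T (Fin.cons (x0 j0) (fun k => y k (j' k)))‖ ^ ρ) ^ (1/ρ)) ^ r
              ≤ ((∑ j0 : Fin N,
                  ‖T (Fin.cons (x0 j0) (fun k => y k (j' k)))‖ ^ r) ^ (1/r)) ^ r := by
                apply Real.rpow_le_rpow (Real.rpow_nonneg (Finset.sum_nonneg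
                  fun j0 _ => Real.rpow_nonneg (norm_nonneg _) _) _) mono hr0.le
            _ = ∑ j0 : Fin N, ‖T (Fin.cons (x0 j0) (fun k => y k (j' k)))‖ ^ r := by
                rw [← Real.rpow_mul hnn, one_div, inv_mul_cancel₀ hr0.ne', Real.rpow_one]
        have step2 : ∑ j' : Fin m → Fin N', ‖S (fun k => y k (j' k))‖ ^ r ≤
            ∑ j0 : Fin N, ∑ j' : Fin m → Fin N',
              ‖T (Fin.cons (x0 j0) (fun k => y k (j' k)))‖ ^ r := by
          rw [Finset.sum_comm]
          exact Finset.sum_le_sum fun j' _ => step1 j'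
        calc (∑ j' : Fin m → Fin N', ‖S (fun k => y k (j' k))‖ ^ r) ^ (1/r)
            ≤ (∑ j0 : Fin N, ∑ j' : Fin m → Fin N',
                ‖T (Fin.cons (x0 j0) (fun k => y k (j' k)))‖ ^ r) ^ (1/r) := by
              apply Real.rpow_le_rpow (Finset.sum_nonneg fun j' _ =>
                Real.rpow_nonneg (norm_nonneg _) _) step2 (one_div_nonneg.2 hr0.le)
          _ ≤ C * (weakNorm 𝕂 (p 0) x0 * ∏ k : Fin m, weakNorm 𝕂 (p k.succ) (y k)) :=
              hT_two T hr hp hT N N' hN x0 y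
          _ = (C * weakNorm 𝕂 (p 0) x0) * ∏ k : Fin m, weakNorm 𝕂 (p k.succ) (y k) := by
              ring
      have ihres := IH (fun k => E k.succ) (PiLp (ENNReal.ofReal ρ) (fun _ : Fin N => F))
        r hr (fun k => s k.succ) (fun k => p k.succ) (fun k => q k.succ)
        (fun k => hs k.succ) (fun k => hp k.succ) (fun k => hq k.succ) (fun k => hqp k.succ)
        hks' S (C * weakNorm 𝕂 (p 0) x0)
        (mul_nonneg hC (weakNorm_nonneg _ _)) hTS N hN (fun k => x k.succ)
      have hmink := mixedNorm_minkowski m (fun i => s i.succ)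
        (fun j' j0 => ‖T (Fin.cons (x0 j0) (fun k => x k.succ (j' k)))‖) ρ
        (fun i => hspos i.succ) hρ0 hρs (fun _ _ => norm_nonneg _)
      have heq : mixedNorm m (fun i => s i.succ)
          (fun j' => (∑ j0 : Fin N,
            ‖T (Fin.cons (x0 j0) (fun k => x k.succ (j' k)))‖ ^ ρ) ^ (1/ρ)) =
          mixedNorm m (fun i => s i.succ)
            (fun j' => ‖S (fun k => x k.succ (j' k))‖) := by
        apply congrArg
        funext j'
        rw [hSnorm]
      calc (∑ j0 : Fin N, (mixedNorm m (fun i => s i.succ)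
            (fun j' => ‖T (Fin.cons (x0 j0) (fun k => x k.succ (j' k)))‖)) ^ ρ) ^ (1/ρ)
          ≤ mixedNorm m (fun i => s i.succ)
            (fun j' => (∑ j0 : Fin N,
              ‖T (Fin.cons (x0 j0) (fun k => x k.succ (j' k)))‖ ^ ρ) ^ (1/ρ)) := hmink
        _ = mixedNorm m (fun i => s i.succ)
            (fun j' => ‖S (fun k => x k.succ (j' k))‖) := heq
        _ ≤ (C * weakNorm 𝕂 (p 0) x0) *
              ∏ k : Fin m, weakNorm 𝕂 (q k.succ) (x k.succ) := ihres
        _ = C * weakNorm 𝕂 (p 0) x0 * ∏ k : Fin m, weakNorm 𝕂 (q k.succ) (x k.succ) := by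
            ring
    -- unfold the goal
    rw [mixedNorm, Fin.prod_univ_succ]
    have hfun : ∀ (j0 : Fin N) (jr : Fin m → Fin N),
        (fun k => x k ((Fin.cons j0 jr : Fin (m+1) → Fin N) k)) =
          Fin.cons (α := E) (x 0 j0) (fun k => x k.succ (jr k)) := by
      intro j0 jr
      funext k
      refine Fin.cases ?_ (fun i => ?_) k
      · simp
      · simp
    set M : Fin N → ℝ := fun j0 => mixedNorm m (fun i => s i.succ)
      (fun j' => ‖T (Fin.cons (x 0 j0) (fun k => x k.succ (j' k)))‖) with hMdef
    have hgoalrw : ∀ j0 : Fin N, (mixedNorm m (fun i => s i.succ)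
        (fun jr => ‖T (fun k => x k ((Fin.cons j0 jr : Fin (m+1) → Fin N) k))‖)) = M j0 := by
      intro j0
      apply congrArg
      funext jr
      rw [hfun j0 jr]
    simp only [hgoalrw]
    have hMnn : ∀ j0, 0 ≤ M j0 := fun j0 => mixedNorm_nonneg m _ _ fun j' => norm_nonneg _
    rcases eq_or_lt_of_le (hδ 0) with hδ0 | hδ0
    · -- p 0 = q 0
      have h10 : 1 / p 0 = 1 / q 0 := by linarith
      have hpq0 : p 0 = q 0 := by
        rw [← one_div_one_div (p 0), h10, one_div_one_div]
      have hs0ρ : s 0 = ρ := by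
        have h1 : 1 / s 0 = 1 / ρ := by rw [hρinv, hs0eq]; linarith
        rw [← one_div_one_div (s 0), h1, one_div_one_div]
      rw [hs0ρ]
      have := key3 (x 0)
      rw [hpq0] at this
      calc (∑ j0 : Fin N, M j0 ^ ρ) ^ (1/ρ)
          ≤ C * weakNorm 𝕂 (q 0) (x 0) * ∏ k : Fin m, weakNorm 𝕂 (q k.succ) (x k.succ) := this
        _ = C * (weakNorm 𝕂 (q 0) (x 0) * ∏ k : Fin m, weakNorm 𝕂 (q k.succ) (x k.succ)) := by
            ring
    · -- p 0 < q 0, weighted case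
      set t : ℝ := (1 / p 0 - 1 / q 0)⁻¹ with htdef
      have ht : 1 / t = 1 / p 0 - 1 / q 0 := by rw [one_div, htdef, inv_inv]
      have ht0 : 0 < t := by rw [htdef]; exact inv_pos.2 hδ0
      have hp0q0 : p 0 < q 0 := by
        apply lt_of_one_div_lt_one_div (hqpos 0)
        linarith
      have hrel : 1 / t + 1 / s 0 = 1 / ρ := by rw [ht, hs0eq, hρinv]; ring
      set H : ℝ := ∑ j0 : Fin N, M j0 ^ s 0 with hHdef
      have hH0 : 0 ≤ H := Finset.sum_nonneg fun j0 _ => Real.rpow_nonneg (hMnn j0) _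
      rcases eq_or_lt_of_le hH0 with hH | hH
      · rw [← hH, Real.zero_rpow (one_div_ne_zero (hspos 0).ne')]
        have : 0 ≤ C * (weakNorm 𝕂 (q 0) (x 0) *
            ∏ k : Fin m, weakNorm 𝕂 (q k.succ) (x k.succ)) :=
          mul_nonneg hC (mul_nonneg (weakNorm_nonneg _ _)
            (Finset.prod_nonneg fun k _ => weakNorm_nonneg _ _))
        linarith
      · set a : Fin N → ℝ := fun j0 => M j0 ^ (s 0 / t) / H ^ (1/t) with hadef
        have ha : ∀ j0, 0 ≤ a j0 := fun j0 =>
          div_nonneg (Real.rpow_nonneg (hMnn j0) _) (Real.rpow_nonneg hH0 _)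
        have hat : ∑ j0 : Fin N, a j0 ^ t = 1 := by
          have e : ∀ j0 : Fin N, a j0 ^ t = M j0 ^ s 0 / H := by
            intro j0
            rw [hadef]
            rw [Real.div_rpow (Real.rpow_nonneg (hMnn j0) _) (Real.rpow_nonneg hH0 _),
              ← Real.rpow_mul (hMnn j0), ← Real.rpow_mul hH0,
              div_mul_cancel₀ _ ht0.ne', one_div_mul_cancel ht0.ne', Real.rpow_one]
          simp only [e]
          rw [← Finset.sum_div, ← hHdef, div_self hH.ne']
        set x0' : Fin N → E 0 := fun j0 => ((a j0 : ℝ) : 𝕂) • x 0 j0 with hx0'def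
        have hsmul : ∀ (j0 : Fin N) (y : ∀ k : Fin m, E k.succ),
            T (Fin.cons (x0' j0) y) = ((a j0 : ℝ) : 𝕂) • T (Fin.cons (x 0 j0) y) := by
          intro j0 y
          have h1 : Fin.cons (α := E) (x0' j0) y =
              Function.update (Fin.cons (α := E) (x 0 j0) y) 0
                (((a j0 : ℝ) : 𝕂) • (Fin.cons (α := E) (x 0 j0) y) 0) := by
            rw [Fin.cons_zero, Fin.update_cons_zero]
          rw [h1, T.map_update_smul, Function.update_eq_self]
        have hM' : ∀ j0 : Fin N, mixedNorm m (fun i => s i.succ)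
            (fun j' => ‖T (Fin.cons (x0' j0) (fun k => x k.succ (j' k)))‖) = a j0 * M j0 := by
          intro j0
          have e : (fun j' : Fin m → Fin N =>
              ‖T (Fin.cons (x0' j0) (fun k => x k.succ (j' k)))‖) =
              fun j' => a j0 * ‖T (Fin.cons (x 0 j0) (fun k => x k.succ (j' k)))‖ := by
            funext j'
            rw [hsmul, norm_smul, RCLike.norm_ofReal, abs_of_nonneg (ha j0)]
          rw [e, mixedNorm_smul m _ _ _ (fun i => hspos i.succ)
            (fun j' => norm_nonneg _) (ha j0), hMdef]
        have hkey := key3 x0'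
        simp only [hM'] at hkey
        have hexp1 : (s 0 / t + 1) * ρ = s 0 := exp_aux1 ht0 (hspos 0) hρ0 hrel
        have hcomp : (∑ j0 : Fin N, (a j0 * M j0) ^ ρ) ^ (1/ρ) = H ^ (1 / s 0) := by
          have e1 : ∀ j0 : Fin N, (a j0 * M j0) ^ ρ = M j0 ^ s 0 / H ^ (ρ/t) := by
            intro j0
            have h2 : a j0 * M j0 = M j0 ^ (s 0 / t + 1) / H ^ (1/t) := by
              rw [Real.rpow_add' (hMnn j0) (add_pos (div_pos (hspos 0) ht0) zero_lt_one).ne', Real.rpow_one,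
                hadef]
              ring
            rw [h2, Real.div_rpow (Real.rpow_nonneg (hMnn j0) _) (Real.rpow_nonneg hH0 _),
              ← Real.rpow_mul (hMnn j0), ← Real.rpow_mul hH0, hexp1, one_div_mul_eq_div]
          simp only [e1]
          rw [← Finset.sum_div, ← hHdef]
          have e2 : H / H ^ (ρ/t) = H ^ (1 - ρ/t) := by
            rw [Real.rpow_sub hH, Real.rpow_one]
          rw [e2, ← Real.rpow_mul hH0]
          rw [exp_aux2 ht0 (hspos 0) hρ0 hrel]
        rw [hcomp] at hkey
        have hw := weakNorm_smul_le (𝕂 := 𝕂) (p 0) (q 0) t (hp 0) hp0q0 ht (x 0) a ha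
          (le_of_eq hat)
        calc (∑ j0 : Fin N, M j0 ^ s 0) ^ (1 / s 0) = H ^ (1 / s 0) := by rw [← hHdef]
          _ ≤ C * weakNorm 𝕂 (p 0) x0' *
                ∏ k : Fin m, weakNorm 𝕂 (q k.succ) (x k.succ) := hkey
          _ ≤ C * weakNorm 𝕂 (q 0) (x 0) *
                ∏ k : Fin m, weakNorm 𝕂 (q k.succ) (x k.succ) := by
              apply mul_le_mul_of_nonneg_right _ (Finset.prod_nonneg fun k _ =>
                weakNorm_nonneg _ _)
              exact mul_le_mul_of_nonneg_left hw hC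
          _ = C * (weakNorm 𝕂 (q 0) (x 0) *
                ∏ k : Fin m, weakNorm 𝕂 (q k.succ) (x k.succ)) := by ring

theorem stmt13 (𝕂 : Type*) [RCLike 𝕂] (m : ℕ) (hm : 1 ≤ m)
    (r : ℝ) (hr : 1 ≤ r) (s p q : Fin m → ℝ)
    (hs : ∀ k, 1 ≤ s k) (hp : ∀ k, 1 ≤ p k) (hq : ∀ k, 1 ≤ q k)
    (hpos : 0 < 1 / r - (∑ k, 1 / p k) + ∑ k, 1 / q k)
    (hqp : ∀ k, p k ≤ q k)
    (hks : ∀ k : Fin m,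
      1 / s k - ∑ i ∈ univ.filter (fun i => k ≤ i), 1 / q i =
        1 / r - ∑ i ∈ univ.filter (fun i => k ≤ i), 1 / p i)
    (E : Fin m → Type*) (F : Type*)
    [∀ k, NormedAddCommGroup (E k)] [∀ k, NormedSpace 𝕂 (E k)] [∀ k, CompleteSpace (E k)]
    [NormedAddCommGroup F] [NormedSpace 𝕂 F] [CompleteSpace F]
    (T : ContinuousMultilinearMap 𝕂 E F) (C : ℝ) (hC : 0 < C)
    (hT : ∀ (N : ℕ), 0 < N → ∀ x : ∀ k, Fin N → E k,
      (∑ j : Fin m → Fin N, ‖T (fun k => x k (j k))‖ ^ r) ^ (1 / r)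
        ≤ C * ∏ k, weakNorm 𝕂 (p k) (x k))
    (N : ℕ) (hN : 0 < N) (x : ∀ k, Fin N → E k) :
    mixedNorm m s (fun j => ‖T (fun k => x k (j k))‖)
      ≤ C * ∏ k, weakNorm 𝕂 (q k) (x k) :=
  mainthm m E F r hr s p q hs hp hq hqp hks T C hC.le hT N hN x
end
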